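/- arXiv:1709.02420 — 2 statements merged into one kernel-verified Lean document; each statement's English description precedes it below -/
import Mathlib

section
/- Suppose t₁ and t₂ are vertices of depth d̄ ≥ δ lying in a single horoball H of the Groves–Manning space X. Then for each i ∈ {1,2} there is a geodesic γᵢ from the identity vertex * to tᵢ of the form (ηᵢ, αᵢ, τᵢ, βᵢ), where the endpoint xᵢ of ηᵢ is the first point of γᵢ in H(d̄), αᵢ and βᵢ are vertical segments of the same length contained in H^{d̄}, and τᵢ is a horizontal segment of length ≤ 3. Furthermore d(x₁, x₂) ≤ 2δ + 1. -/
/-! Core definitions: Cayley graphs, combinatorial horoballs, and the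
Groves–Manning space of a relatively hyperbolic pair, as a locally finite graph. -/

open SimpleGraph

namespace GM

variable {G : Type} [Group G] {ι : Type}

/-- Adjacency in the Cayley graph of `G` with respect to the symmetrized set `S`. -/
def cayleyAdj (S : Set G) (a b : G) : Prop :=
  a ≠ b ∧ (a⁻¹ * b ∈ S ∨ b⁻¹ * a ∈ S)

/-- The Cayley graph of `G` with respect to `S`. -/
def cayleyGraph (S : Set G) : SimpleGraph G where
  Adj := cayleyAdj S
  symm := ⟨by rintro a b ⟨h1, h2⟩; exact ⟨h1.symm, h2.symm⟩⟩
  loopless := ⟨fun a h => h.1 rfl⟩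

/-- The full subgraph of the Cayley graph on the left cosets of `P i`
(the union over all cosets; distinct cosets lie in distinct components). -/
def cosetGraph (S : Set G) (P : ι → Subgroup G) (i : ι) : SimpleGraph G where
  Adj a b := cayleyAdj S a b ∧ a⁻¹ * b ∈ P i
  symm := by
    constructor
    rintro a b ⟨⟨h0, h1⟩, h2⟩
    refine ⟨⟨h0.symm, h1.symm⟩, ?_⟩
    have := (P i).inv_mem h2
    simpa [mul_inv_rev] using this
  loopless := ⟨fun a h => h.1.1 rfl⟩

/-- Vertices of the Groves–Manning space: the group `G` (depth 0), together with,
for each `i : ι` and `g : G`, a vertex `(g, k)` at depth `k ≥ 1` in the combinatorial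
horoball over the coset `g • (P i)`. -/
def GMVert (G ι : Type) : Type := G ⊕ (ι × G × ℕ+)

/-- The depth function `𝒟` on vertices. -/
def depth : GMVert G ι → ℕ
  | .inl _ => 0
  | .inr (_, _, k) => (k : ℕ)

/-- The underlying group element ("base") of a vertex. -/
def baseElt : GMVert G ι → G
  | .inl g => g
  | .inr (_, g, _) => g

/-- The vertex over `g` at depth `l` in the horoballs for the subgroup `P i`. -/
def atLevel (i : ι) (g : G) : ℕ → GMVert G ι
  | 0 => .inl g
  | (l + 1) => .inr (i, g, ⟨l + 1, Nat.succ_pos l⟩)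

/-- Horizontal adjacency at depth `k ≥ 1` inside a horoball: two distinct elements of a
common left coset of `P i` whose distance in the coset graph is at most `2 ^ k`. -/
def horizAdjPos (S : Set G) (P : ι → Subgroup G) (i : ι) (k : ℕ) (a b : G) : Prop :=
  a ≠ b ∧ a⁻¹ * b ∈ P i ∧ (cosetGraph S P i).Reachable a b ∧ (cosetGraph S P i).dist a b ≤ 2 ^ k

/-- Horizontal adjacency at depth `l` (at depth `0` this is an edge of the coset graph). -/
def hAdjL (S : Set G) (P : ι → Subgroup G) (i : ι) (l : ℕ) (a b : G) : Prop :=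
  match l with
  | 0 => (cosetGraph S P i).Adj a b
  | (m + 1) => horizAdjPos S P i (m + 1) a b

/-- Adjacency in the Groves–Manning space: Cayley edges at depth 0, vertical edges
joining `(g, k)` to `(g, k+1)`, and horizontal horoball edges. -/
def gmAdj (S : Set G) (P : ι → Subgroup G) : GMVert G ι → GMVert G ι → Prop
  | .inl a, .inl b => cayleyAdj S a b
  | .inl a, .inr (_, b, k) => a = b ∧ (k : ℕ) = 1
  | .inr (_, a, k), .inl b => a = b ∧ (k : ℕ) = 1
  | .inr (i, a, k), .inr (j, b, l) =>
      i = j ∧ ((a = b ∧ ((l : ℕ) = (k : ℕ) + 1 ∨ (k : ℕ) = (l : ℕ) + 1)) ∨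
        ((k : ℕ) = (l : ℕ) ∧ horizAdjPos S P i (k : ℕ) a b))

/-- The (1-skeleton of the) Groves–Manning space of `(G, {P i}, S)`. -/
def GMGraph (S : Set G) (P : ι → Subgroup G) : SimpleGraph (GMVert G ι) where
  Adj := gmAdj S P
  symm := by
    constructor
    rintro (a | ⟨i, a, k⟩) (b | ⟨j, b, l⟩) h
    · exact ⟨h.1.symm, h.2.symm⟩
    · exact ⟨h.1.symm, h.2⟩
    · exact ⟨h.1.symm, h.2⟩
    · obtain ⟨rfl, (⟨rfl, hv⟩ | ⟨hk, hh⟩)⟩ := h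
      · exact ⟨rfl, Or.inl ⟨rfl, hv.symm⟩⟩
      · refine ⟨rfl, Or.inr ⟨hk.symm, hh.1.symm, ?_, hh.2.2.1.symm, ?_⟩⟩
        · have := (P i).inv_mem hh.2.1; simpa [mul_inv_rev] using this
        · rw [SimpleGraph.dist_comm, ← hk]; exact hh.2.2.2
  loopless := by
    constructor
    rintro (a | ⟨i, a, k⟩) h
    · exact h.1 rfl
    · obtain ⟨-, (⟨-, hv⟩ | ⟨-, hh⟩)⟩ := h
      · omega
      · exact hh.1 rfl

variable (S : Set G) (P : ι → Subgroup G)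

/-- The identity vertex `*` of the Groves–Manning space. -/
def idv : GMVert G ι := Sum.inl 1

/-- The ball `B_r(c)` of radius `r` about `c`, in the edge-path metric of the
Groves–Manning space. -/
def gball (c : GMVert G ι) (r : ℕ) : Set (GMVert G ι) :=
  {v | (GMGraph S P).dist c v ≤ r}

/-- The horoball over the coset `t • (P i)`. -/
def horoball (i : ι) (t : G) : Set (GMVert G ι) :=
  fun v => match v with
  | .inl g => t⁻¹ * g ∈ P i
  | .inr (j, g, _) => j = i ∧ t⁻¹ * g ∈ P i

/-- `H(m)`: the vertices of the horoball at depth exactly `m`. -/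
def horoSphere (i : ι) (t : G) (m : ℕ) : Set (GMVert G ι) :=
  {v | v ∈ horoball P i t ∧ depth v = m}

/-- `H^m`: the `m`-horoball, all vertices of the horoball at depth at least `m`. -/
def horoDeep (i : ι) (t : G) (m : ℕ) : Set (GMVert G ι) :=
  {v | v ∈ horoball P i t ∧ m ≤ depth v}

/-- A walk is geodesic if its length realizes the graph distance of its endpoints. -/
def IsGeodesic {V : Type} (Γ : SimpleGraph V) {a b : V} (p : Γ.Walk a b) : Prop :=
  p.length = Γ.dist a b

/-- `Γ` is `δ`-hyperbolic: all geodesic triangles are `δ`-slim. -/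
def SlimTriangles {V : Type} (Γ : SimpleGraph V) (δ : ℕ) : Prop :=
  ∀ ⦃a b c : V⦄ (p : Γ.Walk a b) (q : Γ.Walk b c) (r : Γ.Walk a c),
    IsGeodesic Γ p → IsGeodesic Γ q → IsGeodesic Γ r →
    ∀ v ∈ r.support,
      (∃ w ∈ p.support, Γ.dist v w ≤ δ) ∨ (∃ w ∈ q.support, Γ.dist v w ≤ δ)

end GM

namespace GM

variable {G : Type} [Group G] {ι : Type}

/-- A walk in the Groves–Manning space is vertical if each of its edges is vertical,
i.e. preserves the underlying group element. -/
def IsVerticalWalk {Γ : SimpleGraph (GMVert G ι)} {a b : GMVert G ι} (w : Γ.Walk a b) :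
    Prop :=
  ∀ d ∈ w.darts, baseElt d.toProd.1 = baseElt d.toProd.2

/-- A walk in the Groves–Manning space is horizontal if each of its edges is horizontal,
i.e. preserves the depth. -/
def IsHorizontalWalk {Γ : SimpleGraph (GMVert G ι)} {a b : GMVert G ι} (w : Γ.Walk a b) :
    Prop :=
  ∀ d ∈ w.darts, depth d.toProd.1 = depth d.toProd.2

end GM

set_option linter.unusedSectionVars false

namespace GM

variable {G : Type} [Group G] {ι : Type}

section Basic

variable {S : Set G} {P : ι → Subgroup G} {i : ι} {g : G}

@[simp] lemma depth_atLevel (j : ι) (a : G) (l : ℕ) :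
    depth (atLevel j a l : GMVert G ι) = l := by cases l <;> rfl

@[simp] lemma baseElt_atLevel (j : ι) (a : G) (l : ℕ) :
    baseElt (atLevel j a l : GMVert G ι) = a := by cases l <;> rfl

lemma atLevel_mem_horoball {a : G} (ha : g⁻¹ * a ∈ P i) (l : ℕ) :
    atLevel i a l ∈ horoball P i g := by
  cases l with
  | zero => exact ha
  | succ m => exact ⟨rfl, ha⟩

lemma base_mem_of_mem {v : GMVert G ι} (hv : v ∈ horoball P i g) :
    g⁻¹ * baseElt v ∈ P i := by
  rcases v with a | ⟨j, a, m⟩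
  · exact hv
  · exact hv.2

lemma eq_atLevel {v : GMVert G ι} (hv : v ∈ horoball P i g) {k : ℕ}
    (hd : depth v = k) (hk : 1 ≤ k) : v = atLevel i (baseElt v) k := by
  rcases v with a | ⟨j, a, m⟩
  · simp only [depth] at hd; omega
  · obtain ⟨hji, -⟩ := hv
    subst hji
    have hm : (m : ℕ) = k := hd
    obtain ⟨k', rfl⟩ : ∃ k', k = k' + 1 := ⟨k - 1, by omega⟩
    show Sum.inr (j, a, m) = Sum.inr (j, a, (⟨k' + 1, Nat.succ_pos k'⟩ : ℕ+))
    rw [PNat.coe_injective (show (m:ℕ) = ((⟨k' + 1, Nat.succ_pos k'⟩ : ℕ+) : ℕ) from hm)]; rfl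

lemma depth_adj {u v : GMVert G ι} (h : (GMGraph S P).Adj u v) :
    depth u ≤ depth v + 1 ∧ depth v ≤ depth u + 1 := by
  rcases u with a | ⟨j, a, k⟩ <;> rcases v with b | ⟨j', b, l⟩
  · simp [depth]
  · obtain ⟨-, h2⟩ := h
    constructor <;> simp [depth, h2]
  · obtain ⟨-, h2⟩ := h
    constructor <;> simp [depth, h2]
  · obtain ⟨-, (⟨-, h2⟩ | ⟨h2, -⟩)⟩ := h <;>
      (simp only [depth]; omega)

lemma base_eq_of_depth_ne {u v : GMVert G ι} (h : (GMGraph S P).Adj u v)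
    (hne : depth u ≠ depth v) : baseElt u = baseElt v := by
  rcases u with a | ⟨j, a, k⟩ <;> rcases v with b | ⟨j', b, l⟩
  · exact absurd rfl hne
  · exact h.1
  · exact h.1
  · obtain ⟨-, (⟨h2, -⟩ | ⟨h2, -⟩)⟩ := h
    · exact h2
    · exact absurd h2 hne

lemma adj_horoball {v w : GMVert G ι} (hv : v ∈ horoball P i g) (h1 : 1 ≤ depth v)
    (h : (GMGraph S P).Adj v w) : w ∈ horoball P i g := by
  rcases v with a | ⟨j, a, k⟩
  · exact absurd h1 (by simp [depth])
  · obtain ⟨hji, ha⟩ := hv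
    subst hji
    rcases w with b | ⟨j', b, l⟩
    · obtain ⟨rfl, -⟩ := h
      exact ha
    · obtain ⟨rfl, (⟨rfl, -⟩ | ⟨-, -, hP, -⟩)⟩ := h
      · exact ⟨rfl, ha⟩
      · exact ⟨rfl, by simpa [mul_assoc] using (P j).mul_mem ha hP⟩

lemma adj_classify {u v : GMVert G ι} (hu : u ∈ horoball P i g) (hv : v ∈ horoball P i g)
    (h : (GMGraph S P).Adj u v) :
    baseElt u = baseElt v ∨
      (depth u = depth v ∧ (cosetGraph S P i).Reachable (baseElt u) (baseElt v) ∧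
        (cosetGraph S P i).dist (baseElt u) (baseElt v) ≤ 2 ^ depth u) := by
  rcases u with a | ⟨j, a, k⟩ <;> rcases v with b | ⟨j', b, l⟩
  · -- both at depth 0, Cayley edge inside the coset
    right
    have ha : g⁻¹ * a ∈ P i := hu
    have hb : g⁻¹ * b ∈ P i := hv
    have hadj : (cosetGraph S P i).Adj a b := by
      refine ⟨h, ?_⟩
      have := (P i).mul_mem ((P i).inv_mem ha) hb
      simpa [mul_assoc] using this
    exact ⟨rfl, hadj.reachable, by
      simpa [pow_zero, baseElt, depth] using (SimpleGraph.dist_eq_one_iff_adj.mpr hadj).le⟩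
  · exact Or.inl h.1
  · exact Or.inl h.1
  · obtain ⟨hji, -⟩ := hu
    subst hji
    obtain ⟨hj'i, -⟩ := hv
    subst hj'i
    obtain ⟨-, (⟨h2, -⟩ | ⟨h2, -, -, hr, hdist⟩)⟩ := h
    · exact Or.inl h2
    · exact Or.inr ⟨h2, hr, by simpa [depth, baseElt] using hdist⟩

lemma depth_le_of_walk {u v : GMVert G ι} (p : (GMGraph S P).Walk u v) :
    depth v ≤ depth u + p.length := by
  induction p with
  | nil => simp
  | cons h q ih =>
    have := (depth_adj h).2
    simp only [SimpleGraph.Walk.length_cons]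
    omega

lemma walk_in_horoball {u v : GMVert G ι} (p : (GMGraph S P).Walk u v)
    (hu : u ∈ horoball P i g) (hlen : p.length ≤ depth u) :
    ∀ w ∈ p.support, w ∈ horoball P i g := by
  induction p with
  | nil => intro w hw; rw [SimpleGraph.Walk.support_nil, List.mem_singleton] at hw; subst hw; exact hu
  | @cons u m v h q ih =>
    intro w hw
    rw [SimpleGraph.Walk.support_cons, List.mem_cons] at hw
    rcases hw with rfl | hw
    · exact hu
    · have h1 : 1 ≤ depth u := by
        have := SimpleGraph.Walk.length_cons h q ▸ hlen; omega
      have hm : m ∈ horoball P i g := adj_horoball hu h1 h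
      have hlen' : q.length ≤ depth m := by
        have h2 := (depth_adj h).1
        have h3 := SimpleGraph.Walk.length_cons h q ▸ hlen
        omega
      exact ih hm hlen' w hw

lemma crossing {u v : GMVert G ι} (p : (GMGraph S P).Walk u v)
    (hu : u ∈ horoball P i g) {D : ℕ} (hD : 1 ≤ D) (hud : D ≤ depth u)
    (hvd : depth v ≤ D) :
    ∃ w ∈ p.support, w ∈ horoball P i g ∧ depth w = D := by
  induction p with
  | nil => exact ⟨_, by simp, hu, le_antisymm (by exact hvd) hud⟩
  | @cons u m v h q ih =>
    by_cases he : depth u = D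
    · exact ⟨u, by simp, hu, he⟩
    · have hm : m ∈ horoball P i g := adj_horoball hu (by omega) h
      have hmd : D ≤ depth m := by have := (depth_adj h).1; omega
      obtain ⟨w, hw, hwH, hwd⟩ := ih hm hmd hvd
      exact ⟨w, by simp [hw], hwH, hwd⟩

end Basic

end GM
namespace GM

variable {G : Type} [Group G] {ι : Type}

section Conn

variable {S : Set G} {P : ι → Subgroup G} {i : ι} {g : G}

/-- Left translation as a graph homomorphism of the Cayley graph. -/
def cayleyMul (S : Set G) (a : G) : cayleyGraph S →g cayleyGraph S where
  toFun x := a * x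
  map_rel' := by
    rintro x y ⟨hne, hmem⟩
    refine ⟨fun hc => hne (mul_left_cancel hc), ?_⟩
    have h1 : (a * x)⁻¹ * (a * y) = x⁻¹ * y := by group
    have h2 : (a * y)⁻¹ * (a * x) = y⁻¹ * x := by group
    rw [h1, h2]; exact hmem

/-- Left translation as a graph homomorphism of the coset graph. -/
def cosetMul (S : Set G) (P : ι → Subgroup G) (i : ι) (a : G) :
    cosetGraph S P i →g cosetGraph S P i where
  toFun x := a * x
  map_rel' := by
    rintro x y ⟨⟨hne, hmem⟩, hP⟩
    have h1 : (a * x)⁻¹ * (a * y) = x⁻¹ * y := by group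
    have h2 : (a * y)⁻¹ * (a * x) = y⁻¹ * x := by group
    exact ⟨⟨fun hc => hne (mul_left_cancel hc), by rw [h1, h2]; exact hmem⟩, by rw [h1]; exact hP⟩

lemma cayley_reachable (hSgen : Subgroup.closure S = ⊤) (a b : G) :
    (cayleyGraph S).Reachable a b := by
  have key : ∀ h : G, (cayleyGraph S).Reachable 1 h := by
    intro h
    have hh : h ∈ Subgroup.closure S := hSgen ▸ Subgroup.mem_top h
    induction hh using Subgroup.closure_induction with
    | mem x hx =>
      by_cases hx1 : x = 1
      · subst hx1; exact SimpleGraph.Reachable.refl 1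
      · exact SimpleGraph.Adj.reachable ⟨Ne.symm hx1, Or.inl (by simpa using hx)⟩
    | one => exact SimpleGraph.Reachable.refl 1
    | mul x y hx hy rx ry =>
      have h3 : (cayleyGraph S).Reachable (x * 1) (x * y) := ry.map (cayleyMul S x)
      exact rx.trans (by simpa using h3)
    | inv x hx rx =>
      have h3 : (cayleyGraph S).Reachable (x⁻¹ * 1) (x⁻¹ * x) := rx.map (cayleyMul S x⁻¹)
      have h2 : (cayleyGraph S).Reachable x⁻¹ 1 := by simpa using h3
      exact h2.symm
  have h3 : (cayleyGraph S).Reachable (a * 1) (a * (a⁻¹ * b)) := (key (a⁻¹ * b)).map (cayleyMul S a)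
  simpa [mul_assoc] using h3

lemma coset_reachable (hPgen : Subgroup.closure ((S : Set G) ∩ (P i : Set G)) = P i)
    {a b : G} (hab : a⁻¹ * b ∈ P i) : (cosetGraph S P i).Reachable a b := by
  have key : ∀ h : G, h ∈ Subgroup.closure ((S : Set G) ∩ (P i : Set G)) →
      (cosetGraph S P i).Reachable 1 h := by
    intro h hh
    induction hh using Subgroup.closure_induction with
    | mem x hx =>
      by_cases hx1 : x = 1
      · subst hx1; exact SimpleGraph.Reachable.refl 1
      · exact SimpleGraph.Adj.reachable
          ⟨⟨Ne.symm hx1, Or.inl (by simpa using hx.1)⟩, by simpa using hx.2⟩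
    | one => exact SimpleGraph.Reachable.refl 1
    | mul x y hx hy rx ry =>
      have h3 : (cosetGraph S P i).Reachable (x * 1) (x * y) := ry.map (cosetMul S P i x)
      exact rx.trans (by simpa using h3)
    | inv x hx rx =>
      have h3 : (cosetGraph S P i).Reachable (x⁻¹ * 1) (x⁻¹ * x) := rx.map (cosetMul S P i x⁻¹)
      have h2 : (cosetGraph S P i).Reachable x⁻¹ 1 := by simpa using h3
      exact h2.symm
  have hab' : a⁻¹ * b ∈ Subgroup.closure ((S : Set G) ∩ (P i : Set G)) := by
    rw [hPgen]; exact hab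
  have h3 : (cosetGraph S P i).Reachable (a * 1) (a * (a⁻¹ * b)) :=
    (key (a⁻¹ * b) hab').map (cosetMul S P i a)
  simpa [mul_assoc] using h3

/-- Inclusion of the Cayley graph into the Groves–Manning graph. -/
def liftCayley (S : Set G) (P : ι → Subgroup G) : cayleyGraph S →g GMGraph S P where
  toFun := Sum.inl
  map_rel' := fun h => h

lemma reach_base : ∀ v : GMVert G ι, (GMGraph S P).Reachable v (Sum.inl (baseElt v)) := by
  have key : ∀ (n : ℕ) (j : ι) (a : G) (k : ℕ+), (k : ℕ) = n →
      (GMGraph S P).Reachable (Sum.inr (j, a, k)) (Sum.inl a) := by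
    intro n
    induction n with
    | zero => intro j a k hk; exact absurd hk (by simpa using k.pos.ne')
    | succ m ih =>
      intro j a k hk
      rcases Nat.eq_zero_or_pos m with hm | hm
      · subst hm
        exact SimpleGraph.Adj.reachable (by exact ⟨rfl, hk⟩)
      · have hadj : (GMGraph S P).Adj (Sum.inr (j, a, k)) (Sum.inr (j, a, ⟨m, hm⟩)) := by
          exact ⟨rfl, Or.inl ⟨rfl, Or.inr (by simpa using hk)⟩⟩
        exact hadj.reachable.trans (ih j a ⟨m, hm⟩ rfl)
  rintro (a | ⟨j, a, k⟩)
  · exact SimpleGraph.Reachable.refl _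
  · exact key (k : ℕ) j a k rfl

lemma gm_connected (hSgen : Subgroup.closure S = ⊤) : (GMGraph S P).Connected := by
  rw [SimpleGraph.connected_iff]
  refine ⟨fun u v => ?_, ⟨Sum.inl 1⟩⟩
  have h1 := reach_base (S := S) (P := P) u
  have h2 := reach_base (S := S) (P := P) v
  have h3 : (GMGraph S P).Reachable (Sum.inl (baseElt u)) (Sum.inl (baseElt v)) :=
    (cayley_reachable hSgen (baseElt u) (baseElt v)).map (liftCayley S P)
  exact (h1.trans h3).trans h2.symm

end Conn

section Geod

variable {V : Type} {Γ : SimpleGraph V}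

lemma dist_triangle_reach {a b c : V} (h1 : Γ.Reachable a b) (h2 : Γ.Reachable b c) :
    Γ.dist a c ≤ Γ.dist a b + Γ.dist b c := by
  obtain ⟨p, hp⟩ := h1.exists_walk_length_eq_dist
  obtain ⟨q, hq⟩ := h2.exists_walk_length_eq_dist
  have := SimpleGraph.dist_le (p.append q)
  rwa [SimpleGraph.Walk.length_append, hp, hq] at this

lemma geodesic_split {a b c : V} (p : Γ.Walk a b) (q : Γ.Walk b c)
    (h : IsGeodesic Γ (p.append q)) :
    IsGeodesic Γ p ∧ IsGeodesic Γ q ∧ Γ.dist a c = Γ.dist a b + Γ.dist b c := by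
  have h1 := SimpleGraph.dist_le p
  have h2 := SimpleGraph.dist_le q
  have h3 := dist_triangle_reach (Γ := Γ) ⟨p⟩ ⟨q⟩
  have h4 : p.length + q.length = Γ.dist a c := by
    rw [← SimpleGraph.Walk.length_append]; exact h
  unfold IsGeodesic
  omega

lemma IsGeodesic.reverse {a b : V} {p : Γ.Walk a b} (h : IsGeodesic Γ p) :
    IsGeodesic Γ p.reverse := by
  unfold IsGeodesic at h ⊢
  rw [SimpleGraph.Walk.length_reverse, SimpleGraph.dist_comm]
  exact h

lemma walk_split_at {a b : V} (p : Γ.Walk a b) {k : ℕ} (hk : k ≤ p.length) :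
    ∃ (c : V) (p₁ : Γ.Walk a c) (p₂ : Γ.Walk c b),
      p = p₁.append p₂ ∧ p₁.length = k := by
  induction k with
  | zero => exact ⟨a, SimpleGraph.Walk.nil, p, rfl, rfl⟩
  | succ m ih =>
    obtain ⟨c, p₁, p₂, rfl, hlen⟩ := ih (by omega)
    cases p₂ with
    | nil =>
      exfalso
      rw [SimpleGraph.Walk.length_append, hlen, SimpleGraph.Walk.length_nil] at hk
      omega
    | @cons _ d _ hadj q =>
      refine ⟨d, p₁.concat hadj, q, ?_, by rw [SimpleGraph.Walk.length_concat, hlen]⟩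
      rw [SimpleGraph.Walk.concat_eq_append, ← SimpleGraph.Walk.append_assoc]
      rfl

lemma geodesic_nil_of_eq {a : V} (p : Γ.Walk a a) (h : IsGeodesic Γ p) :
    p.length = 0 := by
  unfold IsGeodesic at h
  rw [h, SimpleGraph.dist_self]

end Geod

end GM
namespace GM

section Build

variable {G : Type} [Group G] {ι : Type}
variable {S : Set G} {P : ι → Subgroup G} {i : ι} {g : G}

lemma adj_atLevel_up (j : ι) (a : G) {m : ℕ} (hm : 1 ≤ m) :
    (GMGraph S P).Adj (atLevel j a m) (atLevel j a (m + 1)) := by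
  obtain ⟨m', rfl⟩ : ∃ m', m = m' + 1 := ⟨m - 1, by omega⟩
  exact ⟨rfl, Or.inl ⟨rfl, Or.inl rfl⟩⟩

lemma adj_atLevel_base (j : ι) (a : G) :
    (GMGraph S P).Adj (atLevel j a 0) (atLevel j a 1) := by
  exact ⟨rfl, rfl⟩

lemma exists_upWalk (j : ι) (a : G) :
    ∀ (s m n : ℕ), 1 ≤ m → n = m + s →
    ∃ w : (GMGraph S P).Walk (atLevel j a m) (atLevel j a n),
      w.length = s ∧ IsVerticalWalk w ∧
      ∀ v ∈ w.support, ∃ r, m ≤ r ∧ r ≤ n ∧ v = atLevel j a r := by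
  intro s
  induction s with
  | zero =>
    intro m n hm hn
    subst hn
    refine ⟨SimpleGraph.Walk.nil, rfl, ?_, ?_⟩
    · intro d hd; simp at hd
    · intro v hv
      simp only [SimpleGraph.Walk.support_nil, List.mem_singleton] at hv
      exact ⟨_, le_refl _, le_refl _, hv⟩
  | succ s ih =>
    intro m n hm hn
    obtain ⟨w, hlen, hvert, hsupp⟩ := ih (m + 1) n (by omega) (by omega)
    refine ⟨SimpleGraph.Walk.cons (adj_atLevel_up j a hm) w, by simp [hlen], ?_, ?_⟩
    · intro d hd
      rw [SimpleGraph.Walk.darts_cons, List.mem_cons] at hd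
      rcases hd with rfl | hd
      · simp
      · exact hvert d hd
    · intro v hv
      rw [SimpleGraph.Walk.support_cons, List.mem_cons] at hv
      rcases hv with rfl | hv
      · exact ⟨m, le_refl m, by omega, rfl⟩
      · obtain ⟨r, h1, h2, h3⟩ := hsupp v hv
        exact ⟨r, by omega, h2, h3⟩

lemma coset_walk_mem : ∀ {a b : G} (_ : (cosetGraph S P i).Walk a b), a⁻¹ * b ∈ P i := by
  intro a b w
  induction w with
  | nil => simpa using (P i).one_mem
  | @cons a c b h q ih =>
    have h1 : a⁻¹ * c ∈ P i := h.2
    have := (P i).mul_mem h1 ih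
    simpa [mul_assoc] using this

lemma adj_atLevel_horiz {a b : G} (hab : a ≠ b) (hP : a⁻¹ * b ∈ P i)
    (hr : (cosetGraph S P i).Reachable a b) {L : ℕ} (hL : 1 ≤ L)
    (hdist : (cosetGraph S P i).dist a b ≤ 2 ^ L) :
    (GMGraph S P).Adj (atLevel i a L) (atLevel i b L) := by
  obtain ⟨L', rfl⟩ : ∃ L', L = L' + 1 := ⟨L - 1, by omega⟩
  exact ⟨rfl, Or.inr ⟨rfl, hab, hP, hr, hdist⟩⟩

/-- ceil-division helper facts -/
lemma cdiv_le_iff {n b k : ℕ} (hb : 1 ≤ b) : (n + b - 1) / b ≤ k ↔ n ≤ k * b := by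
  constructor
  · intro h
    have key : n ≤ (n + b - 1) / b * b := by
      rcases Nat.eq_zero_or_pos n with rfl | hn
      · simp
      · have h1 : (n - 1) / b < (n + b - 1) / b := by
          have : n + b - 1 = (n - 1) + b := by omega
          rw [this, Nat.add_div_right _ (by omega)]
          omega
        have := (Nat.div_lt_iff_lt_mul (by omega : 0 < b)).mp h1
        omega
    calc n ≤ (n + b - 1) / b * b := key
    _ ≤ k * b := Nat.mul_le_mul_right b h
  · intro h
    have h1 : n + b - 1 ≤ k * b + (b - 1) := by omega
    calc (n + b - 1) / b ≤ (k * b + (b - 1)) / b := Nat.div_le_div_right h1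
    _ = k + (b - 1) / b := by rw [Nat.mul_comm k b, Nat.mul_add_div (by omega)]
    _ = k := by rw [Nat.div_eq_of_lt (by omega)]; omega

lemma le_cdiv_mul {n b : ℕ} (hb : 1 ≤ b) : n ≤ (n + b - 1) / b * b :=
  (cdiv_le_iff hb).mp (le_refl _)

lemma cdiv_le_self {n b : ℕ} (hb : 1 ≤ b) : (n + b - 1) / b ≤ n := by
  rw [cdiv_le_iff hb]
  exact Nat.le_mul_of_pos_right n (by omega)

lemma cdiv_double {n b : ℕ} (hb : 1 ≤ b) :
    (n + 2 * b - 1) / (2 * b) ≤ (((n + b - 1) / b) + 2 - 1) / 2 := by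
  rw [cdiv_le_iff (by omega : 1 ≤ 2 * b)]
  calc n ≤ (n + b - 1) / b * b := le_cdiv_mul hb
  _ ≤ ((n + b - 1) / b + 2 - 1) / 2 * 2 * b := by
      have := le_cdiv_mul (n := (n + b - 1) / b) (b := 2) (by omega)
      exact Nat.mul_le_mul_right b this
  _ = ((n + b - 1) / b + 2 - 1) / 2 * (2 * b) := by ring

lemma exists_horizWalk (hPgen : Subgroup.closure ((S : Set G) ∩ (P i : Set G)) = P i) :
    ∀ (n : ℕ) (a b : G) (hga : g⁻¹ * a ∈ P i)
      (w : (cosetGraph S P i).Walk a b) (_ : IsGeodesic (cosetGraph S P i) w)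
      (_ : w.length = n) (L : ℕ) (_ : 1 ≤ L),
    ∃ τ : (GMGraph S P).Walk (atLevel i a L) (atLevel i b L),
      τ.length = (n + 2 ^ L - 1) / 2 ^ L ∧ IsHorizontalWalk τ ∧
      (∀ v ∈ τ.support, ∃ c, g⁻¹ * c ∈ P i ∧ v = atLevel i c L) := by
  intro n
  induction n using Nat.strong_induction_on with
  | _ n ihn =>
    intro a b hga w hgeo hn L hL
    rcases Nat.eq_zero_or_pos n with rfl | hn1
    · -- length 0 : a = b
      have hab : a = b := by
        have : (cosetGraph S P i).dist a b = 0 := by rw [← hgeo, hn]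
        exact (SimpleGraph.Reachable.dist_eq_zero_iff ⟨w⟩).mp this
      subst hab
      refine ⟨SimpleGraph.Walk.nil, ?_, by intro d hd; simp at hd, ?_⟩
      · rw [SimpleGraph.Walk.length_nil, Nat.div_eq_of_lt (by have := Nat.one_le_two_pow (n := L); omega)]
      · intro v hv; simp at hv; exact ⟨a, hga, hv⟩
    · by_cases hsmall : n ≤ 2 ^ L
      · -- single horizontal edge
        have hab : a ≠ b := by
          intro h; subst h
          have := geodesic_nil_of_eq w hgeo
          omega
        have hadj : (GMGraph S P).Adj (atLevel i a L) (atLevel i b L) :=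
          adj_atLevel_horiz hab (coset_walk_mem w) ⟨w⟩ hL (by rw [← hgeo, hn]; exact hsmall)
        refine ⟨SimpleGraph.Walk.cons hadj SimpleGraph.Walk.nil, ?_, ?_, ?_⟩
        · rw [SimpleGraph.Walk.length_cons, SimpleGraph.Walk.length_nil]
          have h2 : 1 ≤ 2 ^ L := Nat.one_le_two_pow
          have hle : (n + 2 ^ L - 1) / 2 ^ L ≤ 1 := (cdiv_le_iff h2).mpr (by omega)
          have hge : ¬ ((n + 2 ^ L - 1) / 2 ^ L ≤ 0) := by
            rw [cdiv_le_iff h2]; omega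
          omega
        · intro d hd
          simp only [SimpleGraph.Walk.darts_cons, SimpleGraph.Walk.darts_nil,
            List.mem_cons, List.not_mem_nil, or_false] at hd
          subst hd
          simp
        · intro v hv
          simp only [SimpleGraph.Walk.support_cons, SimpleGraph.Walk.support_nil,
            List.mem_cons, List.mem_singleton, List.not_mem_nil, or_false] at hv
          rcases hv with rfl | rfl
          · exact ⟨a, hga, rfl⟩
          · exact ⟨b, by
              have := (P i).mul_mem hga (coset_walk_mem w)
              simpa [mul_assoc] using this, rfl⟩
      · -- split off the first 2^L edges
        push_neg at hsmall
        obtain ⟨c, w₁, w₂, rfl, hw1len⟩ := walk_split_at w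
          (show 2 ^ L ≤ w.length by omega)
        obtain ⟨hw1, hw2, -⟩ := geodesic_split w₁ w₂ hgeo
        have hcnot : a ≠ c := by
          intro h; subst h
          have := geodesic_nil_of_eq w₁ hw1
          have := Nat.one_le_two_pow (n := L)
          omega
        have hgc : g⁻¹ * c ∈ P i := by
          have := (P i).mul_mem hga (coset_walk_mem w₁)
          simpa [mul_assoc] using this
        have hadj : (GMGraph S P).Adj (atLevel i a L) (atLevel i c L) :=
          adj_atLevel_horiz hcnot (coset_walk_mem w₁) ⟨w₁⟩ hL (by rw [← hw1]; omega)
        have hw2n : w₂.length = n - 2 ^ L := by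
          have := SimpleGraph.Walk.length_append w₁ w₂
          omega
        have hrec := ihn (n - 2 ^ L) (by have := Nat.one_le_two_pow (n := L); omega)
          c b hgc w₂ hw2 hw2n L hL
        obtain ⟨τ', hτlen, hτhoriz, hτsupp⟩ := hrec
        refine ⟨SimpleGraph.Walk.cons hadj τ', ?_, ?_, ?_⟩
        · rw [SimpleGraph.Walk.length_cons, hτlen]
          have key : n + 2 ^ L - 1 = (n - 2 ^ L + 2 ^ L - 1) + 2 ^ L := by omega
          rw [key, Nat.add_div_right _ (by have := Nat.one_le_two_pow (n := L); omega)]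
        · intro d hd
          rw [SimpleGraph.Walk.darts_cons, List.mem_cons] at hd
          rcases hd with rfl | hd
          · simp
          · exact hτhoriz d hd
        · intro v hv
          rw [SimpleGraph.Walk.support_cons, List.mem_cons] at hv
          rcases hv with rfl | hv
          · exact ⟨a, hga, rfl⟩
          · exact hτsupp v hv

end Build

end GM
namespace GM

section LB

variable {G : Type} [Group G] {ι : Type}
variable {S : Set G} {P : ι → Subgroup G} {i : ι} {g : G}

/-- number of upward darts -/
def nUp {u v : GMVert G ι} (p : (GMGraph S P).Walk u v) : ℕ :=
  p.darts.countP (fun d => decide (depth d.toProd.2 = depth d.toProd.1 + 1))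

def nDown {u v : GMVert G ι} (p : (GMGraph S P).Walk u v) : ℕ :=
  p.darts.countP (fun d => decide (depth d.toProd.1 = depth d.toProd.2 + 1))

def nH {u v : GMVert G ι} (p : (GMGraph S P).Walk u v) : ℕ :=
  p.darts.countP (fun d => decide (depth d.toProd.1 = depth d.toProd.2))

lemma counts_append {u v w : GMVert G ι} (p : (GMGraph S P).Walk u v)
    (q : (GMGraph S P).Walk v w) :
    nUp (p.append q) = nUp p + nUp q ∧ nDown (p.append q) = nDown p + nDown q ∧
      nH (p.append q) = nH p + nH q := by
  unfold nUp nDown nH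
  rw [SimpleGraph.Walk.darts_append, List.countP_append, List.countP_append,
    List.countP_append]
  exact ⟨rfl, rfl, rfl⟩

lemma nUp_cons {u m v : GMVert G ι} (h : (GMGraph S P).Adj u m)
    (q : (GMGraph S P).Walk m v) :
    nUp (SimpleGraph.Walk.cons h q) = nUp q + (if depth m = depth u + 1 then 1 else 0) := by
  unfold nUp
  rw [SimpleGraph.Walk.darts_cons, List.countP_cons]
  simp

lemma nDown_cons {u m v : GMVert G ι} (h : (GMGraph S P).Adj u m)
    (q : (GMGraph S P).Walk m v) :
    nDown (SimpleGraph.Walk.cons h q) = nDown q + (if depth u = depth m + 1 then 1 else 0) := by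
  unfold nDown
  rw [SimpleGraph.Walk.darts_cons, List.countP_cons]
  simp

lemma nH_cons {u m v : GMVert G ι} (h : (GMGraph S P).Adj u m)
    (q : (GMGraph S P).Walk m v) :
    nH (SimpleGraph.Walk.cons h q) = nH q + (if depth u = depth m then 1 else 0) := by
  unfold nH
  rw [SimpleGraph.Walk.darts_cons, List.countP_cons]
  simp

lemma length_eq_counts {u v : GMVert G ι} (p : (GMGraph S P).Walk u v) :
    p.length = nUp p + nDown p + nH p := by
  induction p with
  | nil => rfl
  | @cons u m v h q ih =>
    have htri := depth_adj h
    rw [SimpleGraph.Walk.length_cons, nUp_cons, nDown_cons, nH_cons]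
    split_ifs <;> omega

lemma depth_le_nUp {u v : GMVert G ι} (p : (GMGraph S P).Walk u v) :
    depth v ≤ depth u + nUp p := by
  induction p with
  | nil => simp [nUp]
  | @cons u m v h q ih =>
    have htri := depth_adj h
    rw [nUp_cons]
    split_ifs <;> omega

lemma depth_le_nDown {u v : GMVert G ι} (p : (GMGraph S P).Walk u v) :
    depth u ≤ depth v + nDown p := by
  induction p with
  | nil => simp [nDown]
  | @cons u m v h q ih =>
    have htri := depth_adj h
    rw [nDown_cons]
    split_ifs <;> omega

lemma max_split {u v : GMVert G ι} (p : (GMGraph S P).Walk u v) :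
    ∃ (z : GMVert G ι) (p₁ : (GMGraph S P).Walk u z) (p₂ : (GMGraph S P).Walk z v),
      p = p₁.append p₂ ∧ ∀ w ∈ p.support, depth w ≤ depth z := by
  induction p with
  | nil =>
    refine ⟨_, SimpleGraph.Walk.nil, SimpleGraph.Walk.nil, rfl, ?_⟩
    intro w hw; simp at hw; subst hw; exact le_refl _
  | @cons u m v h q ih =>
    obtain ⟨z, q₁, q₂, hq, hbound⟩ := ih
    by_cases hcmp : depth u ≤ depth z
    · refine ⟨z, SimpleGraph.Walk.cons h q₁, q₂, by rw [SimpleGraph.Walk.cons_append, ← hq], ?_⟩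
      intro w hw
      rw [SimpleGraph.Walk.support_cons, List.mem_cons] at hw
      rcases hw with rfl | hw
      · exact hcmp
      · exact hbound w hw
    · refine ⟨u, SimpleGraph.Walk.nil, SimpleGraph.Walk.cons h q, rfl, ?_⟩
      intro w hw
      rw [SimpleGraph.Walk.support_cons, List.mem_cons] at hw
      rcases hw with rfl | hw
      · exact le_refl _
      · exact le_trans (hbound w hw) (by omega)

lemma base_displacement (hPgen : Subgroup.closure ((S : Set G) ∩ (P i : Set G)) = P i)
    {u v : GMVert G ι} (p : (GMGraph S P).Walk u v)
    (hH : ∀ w ∈ p.support, w ∈ horoball P i g) {K : ℕ}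
    (hK : ∀ w ∈ p.support, depth w ≤ K) :
    (cosetGraph S P i).dist (baseElt u) (baseElt v) ≤ nH p * 2 ^ K := by
  induction p with
  | nil => rw [SimpleGraph.dist_self]; exact Nat.zero_le _
  | @cons u m v h q ih =>
    have hu : u ∈ horoball P i g := hH u (by simp)
    have hm : m ∈ horoball P i g := hH m (by simp)
    have hq : ∀ w ∈ q.support, w ∈ horoball P i g := by
      intro w hw; exact hH w (by simp [hw])
    have hqK : ∀ w ∈ q.support, depth w ≤ K := by
      intro w hw; exact hK w (by simp [hw])
    have ihq := ih hq hqK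
    have hreach_mv : (cosetGraph S P i).Reachable (baseElt m) (baseElt v) :=
      coset_reachable hPgen (by
        have := (P i).mul_mem ((P i).inv_mem (base_mem_of_mem hm)) (base_mem_of_mem (hH v (by simp)))
        simpa [mul_assoc] using this)
    rcases adj_classify hu hm h with hbase | ⟨hdep, hr, hdist⟩
    · -- vertical-ish dart : base unchanged
      rw [hbase]
      calc (cosetGraph S P i).dist (baseElt m) (baseElt v) ≤ nH q * 2 ^ K := ihq
      _ ≤ nH (SimpleGraph.Walk.cons h q) * 2 ^ K := by
          apply Nat.mul_le_mul_right
          rw [nH_cons]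
          omega
    · -- horizontal dart
      have hKu : depth u ≤ K := hK u (by simp)
      have h1 : (cosetGraph S P i).dist (baseElt u) (baseElt v) ≤
          (cosetGraph S P i).dist (baseElt u) (baseElt m) +
          (cosetGraph S P i).dist (baseElt m) (baseElt v) :=
        dist_triangle_reach hr hreach_mv
      have h2 : (cosetGraph S P i).dist (baseElt u) (baseElt m) ≤ 2 ^ K :=
        le_trans hdist (Nat.pow_le_pow_right (by omega) hKu)
      have h3 : nH (SimpleGraph.Walk.cons h q) = nH q + 1 := by
        rw [nH_cons, if_pos hdep]
      rw [h3]
      calc (cosetGraph S P i).dist (baseElt u) (baseElt v)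
          ≤ 2 ^ K + nH q * 2 ^ K := by omega
      _ = (nH q + 1) * 2 ^ K := by ring

/-- The lower bound : any walk between two depth-`D` vertices all of whose vertices
lie in the horoball has length at least `2*s + ⌈d₀ / 2^(D+s)⌉` for some `s ≥ 0`. -/
lemma walk_lower_bound (hPgen : Subgroup.closure ((S : Set G) ∩ (P i : Set G)) = P i)
    {u v : GMVert G ι} (p : (GMGraph S P).Walk u v)
    (hH : ∀ w ∈ p.support, w ∈ horoball P i g) {D : ℕ}
    (hu : depth u = D) (hv : depth v = D) :
    ∃ s : ℕ, 2 * s +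
      ((cosetGraph S P i).dist (baseElt u) (baseElt v) + 2 ^ (D + s) - 1) / 2 ^ (D + s)
        ≤ p.length := by
  obtain ⟨z, p₁, p₂, hsplit, hbound⟩ := max_split p
  have hzD : D ≤ depth z := by
    have := hbound u (by rw [hsplit] at *; exact SimpleGraph.Walk.start_mem_support _)
    omega
  refine ⟨depth z - D, ?_⟩
  have hK : ∀ w ∈ p.support, depth w ≤ depth z := hbound
  have hbd := base_displacement hPgen p hH hK
  have hup : depth z - D ≤ nUp p₁ := by
    have := depth_le_nUp p₁; omega
  have hdn : depth z - D ≤ nDown p₂ := by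
    have := depth_le_nDown p₂; omega
  have hcnt := length_eq_counts p
  have happ := counts_append p₁ p₂
  have hlenapp : p.length = p₁.length + p₂.length := by
    rw [hsplit, SimpleGraph.Walk.length_append]
  have hDz : D + (depth z - D) = depth z := by omega
  rw [hDz]
  have hceil : ((cosetGraph S P i).dist (baseElt u) (baseElt v) + 2 ^ depth z - 1) /
      2 ^ depth z ≤ nH p := by
    rw [cdiv_le_iff (Nat.one_le_two_pow)]
    calc (cosetGraph S P i).dist (baseElt u) (baseElt v) ≤ nH p * 2 ^ depth z := hbd
    _ = nH p * 2 ^ depth z := rfl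
  have hupp : nUp p = nUp p₁ + nUp p₂ := by rw [hsplit]; exact (counts_append p₁ p₂).1
  have hdnp : nDown p = nDown p₁ + nDown p₂ := by rw [hsplit]; exact (counts_append p₁ p₂).2.1
  omega

end LB

end GM
namespace GM

section Min

lemma exists_maximal_minimizer (f : ℕ → ℕ) (B : ℕ) (hBig : ∀ s, B < s → f 0 < f s) :
    ∃ s, s ≤ B ∧ (∀ t, f s ≤ f t) ∧ (∀ t, t ≤ B → f t = f s → t ≤ s) := by
  obtain ⟨s₀, hs₀R, hs₀min⟩ := Finset.exists_min_image (Finset.range (B + 1)) f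
    ⟨0, by simp⟩
  have hglobal : ∀ t, f s₀ ≤ f t := by
    intro t
    by_cases ht : t ≤ B
    · exact hs₀min t (by rw [Finset.mem_range]; omega)
    · have h1 := hBig t (by omega)
      have h2 := hs₀min 0 (by rw [Finset.mem_range]; omega)
      omega
  set Fm := (Finset.range (B + 1)).filter (fun t => f t = f s₀) with hFm
  have hne : Fm.Nonempty := ⟨s₀, by rw [hFm, Finset.mem_filter]; exact ⟨hs₀R, rfl⟩⟩
  have hmem' := Finset.max'_mem Fm hne
  have hmem : Fm.max' hne < B + 1 ∧ f (Fm.max' hne) = f s₀ := by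
    have h1 := Finset.mem_filter.mp hmem'
    exact ⟨Finset.mem_range.mp h1.1, h1.2⟩
  refine ⟨Fm.max' hne, by omega, ?_, ?_⟩

  · intro t
    rw [hmem.2]
    exact hglobal t
  · intro t htB htf
    apply Finset.le_max'
    rw [Finset.mem_filter, Finset.mem_range]
    exact ⟨by omega, by rw [htf, hmem.2]⟩

end Min

section Struct

variable {G : Type} [Group G] {ι : Type}
variable {S : Set G} {P : ι → Subgroup G} {i : ι} {g : G}

lemma IsVerticalWalk.reverse {u v : GMVert G ι} {w : (GMGraph S P).Walk u v}
    (h : IsVerticalWalk w) : IsVerticalWalk w.reverse := by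
  intro d hd
  rw [SimpleGraph.Walk.darts_reverse, List.mem_reverse, List.mem_map] at hd
  obtain ⟨d', hd', rfl⟩ := hd
  exact (h d' hd').symm

lemma structured_tail (hPgen : Subgroup.closure ((S : Set G) ∩ (P i : Set G)) = P i)
    {a b : G} (hga : g⁻¹ * a ∈ P i) (hgb : g⁻¹ * b ∈ P i) (hab : a ≠ b)
    {D : ℕ} (hD : 1 ≤ D)
    (ρ : (GMGraph S P).Walk (atLevel i a D) (atLevel i b D))
    (hgeo : IsGeodesic (GMGraph S P) ρ)
    (hH : ∀ w ∈ ρ.support, w ∈ horoball P i g) :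
    ∃ (s ℓ : ℕ) (α : (GMGraph S P).Walk (atLevel i a D) (atLevel i a (D + s)))
      (τ : (GMGraph S P).Walk (atLevel i a (D + s)) (atLevel i b (D + s)))
      (β : (GMGraph S P).Walk (atLevel i b (D + s)) (atLevel i b D)),
      α.length = s ∧ β.length = s ∧ τ.length = ℓ ∧ ℓ ≤ 3 ∧
      ρ.length = 2 * s + ℓ ∧
      IsVerticalWalk α ∧ IsVerticalWalk β ∧ IsHorizontalWalk τ ∧
      (∀ v ∈ α.support, v ∈ horoDeep P i g D) ∧
      (∀ v ∈ β.support, v ∈ horoDeep P i g D) ∧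
      (∀ v ∈ τ.support, v ∈ horoDeep P i g D) ∧
      (∀ v ∈ τ.support, depth v = D + s) := by
  have hPab : a⁻¹ * b ∈ P i := by
    have := (P i).mul_mem ((P i).inv_mem hga) hgb
    simpa [mul_assoc] using this
  have hr : (cosetGraph S P i).Reachable a b := coset_reachable hPgen hPab
  set d₀ := (cosetGraph S P i).dist a b with hd₀
  have hd₀pos : 1 ≤ d₀ := hr.pos_dist_of_ne hab
  set f : ℕ → ℕ := fun s => 2 * s + (d₀ + 2 ^ (D + s) - 1) / 2 ^ (D + s) with hf
  have hBig : ∀ s, d₀ < s → f 0 < f s := by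
    intro s hs
    have h1 : f 0 ≤ d₀ := by
      simp only [hf, Nat.mul_zero, Nat.zero_add, Nat.add_zero]
      exact cdiv_le_self Nat.one_le_two_pow
    have h2 : 2 * s ≤ f s := Nat.le_add_right _ _
    omega
  obtain ⟨s, hsB, hmin, hmax⟩ := exists_maximal_minimizer f d₀ hBig
  set ℓ := (d₀ + 2 ^ (D + s) - 1) / 2 ^ (D + s) with hℓ
  -- construct the competitor walk
  obtain ⟨α, hαlen, hαvert, hαsupp⟩ :=
    exists_upWalk (S := S) (P := P) i a s D (D + s) hD rfl
  obtain ⟨w₀, hw₀len⟩ := hr.exists_walk_length_eq_dist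
  have hw₀geo : IsGeodesic (cosetGraph S P i) w₀ := hw₀len
  obtain ⟨τ, hτlen, hτhoriz, hτsupp⟩ :=
    exists_horizWalk (g := g) hPgen d₀ a b hga w₀ hw₀geo (by rw [hw₀len]) (D + s) (by omega)
  obtain ⟨β', hβlen, hβvert, hβsupp⟩ :=
    exists_upWalk (S := S) (P := P) i b s D (D + s) hD rfl
  set β := β'.reverse with hβ
  have hπ : ((α.append (τ.append β)).length) = 2 * s + ℓ := by
    rw [SimpleGraph.Walk.length_append, SimpleGraph.Walk.length_append,
      SimpleGraph.Walk.length_reverse, hαlen, hβlen, hτlen]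
    omega
  have hub : (GMGraph S P).dist (atLevel i a D) (atLevel i b D) ≤ 2 * s + ℓ := by
    rw [← hπ]; exact SimpleGraph.dist_le _
  have hdepa : depth (atLevel i a D : GMVert G ι) = D := by simp
  have hdepb : depth (atLevel i b D : GMVert G ι) = D := by simp
  obtain ⟨s', hs'⟩ := walk_lower_bound (g := g) hPgen ρ hH hdepa hdepb
  have hs'2 : f s' ≤ ρ.length := by
    have hba : baseElt (atLevel i a D : GMVert G ι) = a := by simp
    have hbb : baseElt (atLevel i b D : GMVert G ι) = b := by simp
    rw [hba, hbb] at hs'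
    exact hs'
  have hρlen : ρ.length = 2 * s + ℓ := by
    have h1 : f s ≤ ρ.length := le_trans (hmin s') hs'2
    have h2 : ρ.length ≤ 2 * s + ℓ := by rw [hgeo]; exact hub
    have h3 : f s = 2 * s + ℓ := rfl
    omega
  have hℓ3 : ℓ ≤ 3 := by
    by_contra hcon
    push_neg at hcon
    rcases Nat.lt_or_ge s d₀ with hlt | hge
    · -- compare with s+1
      have hdouble : (d₀ + 2 ^ (D + s + 1) - 1) / 2 ^ (D + s + 1) ≤ (ℓ + 2 - 1) / 2 := by
        have h2 : 2 ^ (D + s + 1) = 2 * 2 ^ (D + s) := by ring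
        rw [h2]
        exact cdiv_double Nat.one_le_two_pow
      have hfs1 : f (s + 1) ≤ 2 * s + 2 + (ℓ + 1) / 2 := by
        have : f (s + 1) = 2 * (s + 1) + (d₀ + 2 ^ (D + (s + 1)) - 1) / 2 ^ (D + (s + 1)) := rfl
        rw [this]
        have he : D + (s + 1) = D + s + 1 := by omega
        rw [he]
        omega
      have hle : f (s + 1) ≤ f s := by
        have h3 : f s = 2 * s + ℓ := rfl
        omega
      have hge2 : f s ≤ f (s + 1) := hmin (s + 1)
      have heq : f (s + 1) = f s := by omega
      have := hmax (s + 1) (by omega) heq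
      omega
    · -- s = d₀ : then ℓ ≤ 1
      have hseq : s = d₀ := by omega
      have h1 : d₀ < 2 ^ (D + s) := by
        calc d₀ < 2 ^ d₀ := Nat.lt_two_pow_self
        _ ≤ 2 ^ (D + s) := Nat.pow_le_pow_right (by omega) (by omega)
      have h2 : ℓ ≤ 1 := by
        rw [hℓ, cdiv_le_iff Nat.one_le_two_pow]
        omega
      omega
  have hβrevlen : β.length = s := by
    rw [hβ, SimpleGraph.Walk.length_reverse]; exact hβlen
  have hαdeep : ∀ v ∈ α.support, v ∈ horoDeep P i g D := by
    intro v hv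
    obtain ⟨r, hr1, hr2, rfl⟩ := hαsupp v hv
    exact ⟨atLevel_mem_horoball hga r, by rw [depth_atLevel]; omega⟩
  have hβdeep : ∀ v ∈ β.support, v ∈ horoDeep P i g D := by
    intro v hv
    rw [hβ, SimpleGraph.Walk.support_reverse, List.mem_reverse] at hv
    obtain ⟨r, hr1, hr2, rfl⟩ := hβsupp v hv
    exact ⟨atLevel_mem_horoball hgb r, by rw [depth_atLevel]; omega⟩
  have hτdeep : ∀ v ∈ τ.support, v ∈ horoDeep P i g D := by
    intro v hv
    obtain ⟨c, hc, rfl⟩ := hτsupp v hv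
    exact ⟨atLevel_mem_horoball hc (D + s), by rw [depth_atLevel]; omega⟩
  have hτdepth : ∀ v ∈ τ.support, depth v = D + s := by
    intro v hv
    obtain ⟨c, hc, rfl⟩ := hτsupp v hv
    rw [depth_atLevel]
  exact ⟨s, ℓ, α, τ, β, hαlen, hβrevlen, hτlen, hℓ3, hρlen, hαvert,
    IsVerticalWalk.reverse hβvert, hτhoriz, hαdeep, hβdeep, hτdeep, hτdepth⟩

end Struct

end GM
namespace GM

section Tent

variable {G : Type} [Group G] {ι : Type}
variable {S : Set G} {P : ι → Subgroup G} {i : ι} {g : G}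

lemma depth_le_of_walk' {u v : GMVert G ι} (p : (GMGraph S P).Walk u v) :
    depth u ≤ depth v + p.length := by
  induction p with
  | nil => simp
  | cons h q ih =>
    have := (depth_adj h).1
    simp only [SimpleGraph.Walk.length_cons]
    omega

lemma base_eq_of_steep : ∀ {u v : GMVert G ι} (p : (GMGraph S P).Walk u v),
    p.length + depth v = depth u → baseElt u = baseElt v := by
  intro u v p
  induction p with
  | nil => intro _; rfl
  | @cons u m v h q ih =>
    intro hsteep
    rw [SimpleGraph.Walk.length_cons] at hsteep
    have h1 := (depth_adj h).1
    have h2 := depth_le_of_walk' q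
    have h3 : depth u = depth m + 1 := by omega
    have h4 : baseElt u = baseElt m := base_eq_of_depth_ne h (by omega)
    rw [h4]
    exact ih (by omega)

lemma near_deep_in_horoball (hSgen : Subgroup.closure S = ⊤) {w z : GMVert G ι}
    (hw : w ∈ horoball P i g) (hdist : (GMGraph S P).dist w z ≤ depth w) :
    z ∈ horoball P i g ∧ depth w ≤ depth z + (GMGraph S P).dist w z := by
  have hconn := gm_connected (P := P) hSgen
  obtain ⟨r, hr⟩ := (hconn.1 w z).exists_walk_length_eq_dist
  constructor
  · exact walk_in_horoball r hw (by omega) z (SimpleGraph.Walk.end_mem_support r)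
  · have := depth_le_of_walk' r
    omega

lemma dist_ge_depth_gap (hSgen : Subgroup.closure S = ⊤) (u v : GMVert G ι) :
    depth v ≤ depth u + (GMGraph S P).dist u v ∧
      depth u ≤ depth v + (GMGraph S P).dist u v := by
  have hconn := gm_connected (P := P) hSgen
  obtain ⟨r, hr⟩ := (hconn.1 u v).exists_walk_length_eq_dist
  have h1 := depth_le_of_walk r
  have h2 := depth_le_of_walk' r
  omega

lemma geodesic_in_horoball (hSgen : Subgroup.closure S = ⊤)
    (hPgen : Subgroup.closure ((S : Set G) ∩ (P i : Set G)) = P i)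
    {δ : ℕ} (hhyp : SlimTriangles (GMGraph S P) δ)
    {u v : GMVert G ι} (hu : u ∈ horoball P i g) (hv : v ∈ horoball P i g)
    {D : ℕ} (hud : depth u = D) (hvd : depth v = D) (hDδ : δ ≤ D) (hD1 : 1 ≤ D)
    (ρ : (GMGraph S P).Walk u v) (hρ : IsGeodesic (GMGraph S P) ρ) :
    ∀ z ∈ ρ.support, z ∈ horoball P i g := by
  have hconn := gm_connected (P := P) hSgen
  obtain ⟨a, rfl⟩ : ∃ a', u = atLevel i a' D := ⟨baseElt u, eq_atLevel hu hud hD1⟩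
  obtain ⟨b, rfl⟩ : ∃ b', v = atLevel i b' D := ⟨baseElt v, eq_atLevel hv hvd hD1⟩
  have hga : g⁻¹ * a ∈ P i := by
    have := base_mem_of_mem hu; simpa using this
  have hgb : g⁻¹ * b ∈ P i := by
    have := base_mem_of_mem hv; simpa using this
  by_cases hab : a = b
  · subst hab
    have hlen0 := geodesic_nil_of_eq ρ hρ
    cases ρ with
    | nil =>
      intro z hz
      simp only [SimpleGraph.Walk.support_nil, List.mem_singleton] at hz
      subst hz; exact hu
    | cons h q => simp at hlen0
  · have hPab : a⁻¹ * b ∈ P i := by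
      have := (P i).mul_mem ((P i).inv_mem hga) hgb
      simpa [mul_assoc] using this
    have hr : (cosetGraph S P i).Reachable a b := coset_reachable hPgen hPab
    set d₀ := (cosetGraph S P i).dist a b with hd₀
    have hd₀1 : 1 ≤ d₀ := hr.pos_dist_of_ne hab
    set N := D + d₀ with hN
    have h2N : d₀ ≤ 2 ^ N := by
      calc d₀ ≤ 2 ^ d₀ := (Nat.lt_two_pow_self).le
      _ ≤ 2 ^ N := Nat.pow_le_pow_right (by omega) (by omega)
    obtain ⟨p, hplen, -, hpsupp⟩ :=
      exists_upWalk (S := S) (P := P) i a d₀ D N hD1 rfl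
    have hpgeo : IsGeodesic (GMGraph S P) p := by
      have hgap := (dist_ge_depth_gap (P := P) hSgen (atLevel i a D) (atLevel i a N)).1
      rw [depth_atLevel, depth_atLevel] at hgap
      have hle := SimpleGraph.dist_le p
      unfold IsGeodesic
      omega
    obtain ⟨β', hβ'len, -, hβ'supp⟩ :=
      exists_upWalk (S := S) (P := P) i b d₀ D N hD1 rfl
    have he : (GMGraph S P).Adj (atLevel i a N) (atLevel i b N) :=
      adj_atLevel_horiz hab hPab hr (by omega) h2N
    set q := SimpleGraph.Walk.cons he β'.reverse with hq
    have hqlen : q.length = d₀ + 1 := by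
      have h1 : q.length = β'.reverse.length + 1 := SimpleGraph.Walk.length_cons he β'.reverse
      have h2 : β'.reverse.length = β'.length := SimpleGraph.Walk.length_reverse β'
      omega
    have hqgeo : IsGeodesic (GMGraph S P) q := by
      have hgap := (dist_ge_depth_gap (P := P) hSgen (atLevel i a N) (atLevel i b D)).2
      rw [depth_atLevel, depth_atLevel] at hgap
      have hne : (GMGraph S P).dist (atLevel i a N) (atLevel i b D) ≠ d₀ := by
        intro heq
        obtain ⟨r, hrlen⟩ :=
          (hconn.1 (atLevel i a N) (atLevel i b D)).exists_walk_length_eq_dist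
        have hsteep : r.length + depth (atLevel i b D : GMVert G ι) =
            depth (atLevel i a N : GMVert G ι) := by
          rw [hrlen, heq, depth_atLevel, depth_atLevel]
          omega
        have := base_eq_of_steep r hsteep
        rw [baseElt_atLevel, baseElt_atLevel] at this
        exact hab this
      have hle := SimpleGraph.dist_le q
      unfold IsGeodesic
      omega
    intro z hz
    rcases hhyp p q ρ hpgeo hqgeo hρ z hz with ⟨w, hw, hwd⟩ | ⟨w, hw, hwd⟩
    · obtain ⟨r, hr1, hr2, rfl⟩ := hpsupp w hw
      have hwH : atLevel i a r ∈ horoball P i g := atLevel_mem_horoball hga r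
      have := near_deep_in_horoball (P := P) (z := z) hSgen hwH
        (by rw [SimpleGraph.dist_comm, depth_atLevel]; omega)
      exact this.1
    · rw [hq, SimpleGraph.Walk.support_cons, List.mem_cons] at hw
      rcases hw with rfl | hw
      · have hwH : atLevel i a N ∈ horoball P i g := atLevel_mem_horoball hga N
        have := near_deep_in_horoball (P := P) (z := z) hSgen hwH
          (by rw [SimpleGraph.dist_comm, depth_atLevel]; omega)
        exact this.1
      · rw [SimpleGraph.Walk.support_reverse, List.mem_reverse] at hw
        obtain ⟨r, hr1, hr2, rfl⟩ := hβ'supp w hw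
        have hwH : atLevel i b r ∈ horoball P i g := atLevel_mem_horoball hgb r
        have := near_deep_in_horoball (P := P) (z := z) hSgen hwH
          (by rw [SimpleGraph.dist_comm, depth_atLevel]; omega)
        exact this.1

end Tent

end GM
namespace GM

section Entry

variable {G : Type} [Group G] {ι : Type}
variable {S : Set G} {P : ι → Subgroup G} {i : ι} {g : G}

lemma mem_dropLast_or_eq {α : Type} :
    ∀ (l : List α) (b x : α), l.getLast? = some b → x ∈ l → x ∈ l.dropLast ∨ x = b := by
  intro l
  induction l with
  | nil => intro b x h hx; simp at hx
  | cons a l ih =>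
    intro b x hlast hx
    cases l with
    | nil =>
      rw [List.getLast?_singleton] at hlast
      rw [List.mem_singleton] at hx
      right
      rw [hx]
      exact Option.some_injective _ hlast
    | cons c l' =>
      rw [List.getLast?_cons_cons] at hlast
      rw [List.mem_cons] at hx
      rcases hx with rfl | hx
      · left; rw [List.dropLast_cons₂]; exact List.mem_cons_self
      · rcases ih b x hlast hx with h | h
        · left; rw [List.dropLast_cons₂]; exact List.mem_cons_of_mem _ h
        · right; exact h

lemma support_getLast? {V : Type} {Γ : SimpleGraph V} :
    ∀ {a b : V} (p : Γ.Walk a b), p.support.getLast? = some b := by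
  intro a b p
  induction p with
  | nil => rw [SimpleGraph.Walk.support_nil, List.getLast?_singleton]
  | @cons a c b h q ih =>
    rw [SimpleGraph.Walk.support_cons, SimpleGraph.Walk.support_eq_cons q,
      List.getLast?_cons_cons, ← SimpleGraph.Walk.support_eq_cons q]
    exact ih

lemma exists_first_split {V : Type} {Γ : SimpleGraph V} (pred : V → Prop) :
    ∀ {a b : V} (p : Γ.Walk a b), pred b →
    ∃ (x : V) (η : Γ.Walk a x) (ρ : Γ.Walk x b),
      p = η.append ρ ∧ pred x ∧ ∀ v ∈ η.support.dropLast, ¬ pred v := by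
  intro a b p
  induction p with
  | nil =>
    intro hb
    refine ⟨_, SimpleGraph.Walk.nil, SimpleGraph.Walk.nil, rfl, hb, ?_⟩
    intro v hv
    rw [SimpleGraph.Walk.support_nil, List.dropLast_singleton] at hv
    simp at hv
  | @cons a c b h q ih =>
    intro hb
    by_cases ha : pred a
    · refine ⟨a, SimpleGraph.Walk.nil, SimpleGraph.Walk.cons h q, rfl, ha, ?_⟩
      intro v hv
      rw [SimpleGraph.Walk.support_nil, List.dropLast_singleton] at hv
      simp at hv
    · obtain ⟨x, η', ρ, hq, hx, havoid⟩ := ih hb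
      refine ⟨x, SimpleGraph.Walk.cons h η', ρ, ?_, hx, ?_⟩
      · rw [SimpleGraph.Walk.cons_append, ← hq]
      · intro v hv
        rw [SimpleGraph.Walk.support_cons,
          List.dropLast_cons_of_ne_nil (SimpleGraph.Walk.support_ne_nil η'),
          List.mem_cons] at hv
        rcases hv with rfl | hv
        · exact ha
        · exact havoid v hv

lemma support_entry {dbar : ℕ} (hdbar : 1 ≤ dbar) {x : GMVert G ι}
    (hx : x ∈ horoSphere P i g dbar)
    {η : (GMGraph S P).Walk (idv : GMVert G ι) x} (hpath : η.IsPath)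
    (havoid : ∀ v ∈ η.support.dropLast, v ∉ horoSphere P i g dbar)
    {y : GMVert G ι} (hy : y ∈ η.support) (hyH : y ∈ horoball P i g)
    (hyd : dbar ≤ depth y) : y = x := by
  classical
  have hsplit := SimpleGraph.Walk.take_spec η hy
  set pre := η.takeUntil y hy with hpre
  set post := η.dropUntil y hy with hpost'
  have hidv : depth (idv : GMVert G ι) = 0 := rfl
  obtain ⟨w, hwsup, hwH, hwd⟩ := crossing pre.reverse hyH hdbar hyd (by rw [hidv]; omega)
  rw [SimpleGraph.Walk.support_reverse, List.mem_reverse] at hwsup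
  have hsupeq : η.support = pre.support ++ post.support.tail := by
    rw [← hsplit, SimpleGraph.Walk.support_append]
  have hwsupη : w ∈ η.support := by
    rw [hsupeq]; exact List.mem_append_left _ hwsup
  have hwx : w = x := by
    rcases mem_dropLast_or_eq η.support x w (support_getLast? η) hwsupη with hmem | heq
    · exact absurd ⟨hwH, hwd⟩ (havoid w hmem)
    · exact heq
  rw [hwx] at hwsup
  have hnodup := hpath.support_nodup
  by_cases hptail : post.support.tail = []
  · have hseq : η.support = pre.support := by rw [hsupeq, hptail, List.append_nil]
    have h1 : η.support.getLast? = some x := support_getLast? η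
    have h2 : pre.support.getLast? = some y := support_getLast? pre
    rw [hseq, h2] at h1
    exact (Option.some_injective _ h1)
  · exfalso
    have h1 : η.support.getLast? = some x := support_getLast? η
    rw [hsupeq, List.getLast?_append_of_ne_nil _ hptail] at h1
    have hxtail : x ∈ post.support.tail := by
      cases htail : post.support.tail with
      | nil => exact absurd htail hptail
      | cons c t =>
        rw [htail] at h1
        have hmem : x ∈ (c :: t).getLast? := by rw [Option.mem_def, h1]
        exact List.mem_of_mem_getLast? hmem
    have hdisj := List.disjoint_of_nodup_append (hsupeq ▸ hnodup)
    exact hdisj hwsup hxtail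

end Entry

end GM
namespace GM

section Final

variable {G : Type} [Group G] {ι : Type}
variable {S : Set G} {P : ι → Subgroup G} {i : ι} {g : G}

lemma entry_close (hSgen : Subgroup.closure S = ⊤)
    (hPgen : Subgroup.closure ((S : Set G) ∩ (P i : Set G)) = P i)
    {δ : ℕ} (hhyp : SlimTriangles (GMGraph S P) δ) (hδ : 1 ≤ δ)
    {dbar : ℕ} (hd : δ ≤ dbar)
    {x₁ x₂ : GMVert G ι} (hx₁ : x₁ ∈ horoSphere P i g dbar) (hx₂ : x₂ ∈ horoSphere P i g dbar)
    {η₁ : (GMGraph S P).Walk (idv : GMVert G ι) x₁}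
    (hη₁g : IsGeodesic (GMGraph S P) η₁) (hη₁p : η₁.IsPath)
    (hη₁a : ∀ v ∈ η₁.support.dropLast, v ∉ horoSphere P i g dbar)
    {η₂ : (GMGraph S P).Walk (idv : GMVert G ι) x₂}
    (hη₂g : IsGeodesic (GMGraph S P) η₂) (hη₂p : η₂.IsPath)
    (hη₂a : ∀ v ∈ η₂.support.dropLast, v ∉ horoSphere P i g dbar) :
    (GMGraph S P).dist x₁ x₂ ≤ 2 * δ + 1 := by
  have hdbar1 : 1 ≤ dbar := le_trans hδ hd
  by_cases hxx : x₁ = x₂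
  · subst hxx; rw [SimpleGraph.dist_self]; omega
  · have hconn := gm_connected (P := P) hSgen
    obtain ⟨a₁, hxa₁⟩ : ∃ a, x₁ = atLevel i a dbar :=
      ⟨baseElt x₁, eq_atLevel hx₁.1 hx₁.2 hdbar1⟩
    obtain ⟨a₂, hxa₂⟩ : ∃ a, x₂ = atLevel i a dbar :=
      ⟨baseElt x₂, eq_atLevel hx₂.1 hx₂.2 hdbar1⟩
    have hga₁ : g⁻¹ * a₁ ∈ P i := by
      have := base_mem_of_mem hx₁.1; rw [hxa₁, baseElt_atLevel] at this; exact this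
    have hga₂ : g⁻¹ * a₂ ∈ P i := by
      have := base_mem_of_mem hx₂.1; rw [hxa₂, baseElt_atLevel] at this; exact this
    have hab : a₁ ≠ a₂ := by
      intro h; apply hxx; rw [hxa₁, hxa₂, h]
    obtain ⟨ρ₀, hρp, hρlen⟩ := hconn.exists_path_of_dist x₁ x₂
    have hρg : IsGeodesic (GMGraph S P) ρ₀ := hρlen
    have hH := geodesic_in_horoball hSgen hPgen hhyp hx₁.1 hx₂.1 hx₁.2 hx₂.2 hd hdbar1 ρ₀ hρg
    subst hxa₁; subst hxa₂
    obtain ⟨s, ℓ, α, τ, β, hαlen, hβlen, hτlen, hℓ3, hρ2, hαv, hβv, hτh,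
      hαdeep, hβdeep, hτdeep, hτdepth⟩ :=
      structured_tail hPgen hga₁ hga₂ hab hdbar1 ρ₀ hρg hH
    have hdist : (GMGraph S P).dist (atLevel i a₁ dbar) (atLevel i a₂ dbar) = 2 * s + ℓ := by
      rw [← hρlen, hρ2]
    have hςlen : (α.append (τ.append β)).length = 2 * s + ℓ := by
      rw [SimpleGraph.Walk.length_append, SimpleGraph.Walk.length_append,
        hαlen, hβlen, hτlen]
      omega
    have hςg : IsGeodesic (GMGraph S P) (α.append (τ.append β)) := by
      unfold IsGeodesic; rw [hςlen, hdist]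
    -- claim 1 : s ≤ δ
    have hsδ : s ≤ δ := by
      by_contra hcon
      push_neg at hcon
      have hw'mem : atLevel i a₁ (dbar + s) ∈ (α.append (τ.append β)).support := by
        rw [SimpleGraph.Walk.mem_support_append_iff]
        exact Or.inl (SimpleGraph.Walk.end_mem_support α)
      have hw'H : atLevel i a₁ (dbar + s) ∈ horoball P i g := atLevel_mem_horoball hga₁ _
      have hw'd : depth (atLevel i a₁ (dbar + s) : GMVert G ι) = dbar + s := depth_atLevel i a₁ _
      rcases hhyp η₁.reverse η₂ (α.append (τ.append β)) (IsGeodesic.reverse hη₁g) hη₂g hςg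
        _ hw'mem with ⟨y, hy, hyd⟩ | ⟨y, hy, hyd⟩
      · rw [SimpleGraph.Walk.support_reverse, List.mem_reverse] at hy
        have hnd := near_deep_in_horoball (P := P) (z := y) hSgen hw'H
          (by rw [hw'd]; omega)
        have hydeep : dbar ≤ depth y := by
          have := hnd.2; rw [hw'd] at this; omega
        have hyx := support_entry hdbar1 hx₁ hη₁p hη₁a hy hnd.1 hydeep
        have hdy : depth y = dbar := by rw [hyx]; exact depth_atLevel i a₁ dbar
        have h2 := hnd.2
        rw [hw'd] at h2
        omega
      · have hnd := near_deep_in_horoball (P := P) (z := y) hSgen hw'H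
          (by rw [hw'd]; omega)
        have hydeep : dbar ≤ depth y := by
          have := hnd.2; rw [hw'd] at this; omega
        have hyx := support_entry hdbar1 hx₂ hη₂p hη₂a hy hnd.1 hydeep
        have hdy : depth y = dbar := by rw [hyx]; exact depth_atLevel i a₂ dbar
        have h2 := hnd.2
        rw [hw'd] at h2
        omega
    -- claim 2 : if s = δ then ℓ ≤ 1
    have hℓδ : s = δ → ℓ ≤ 1 := by
      intro hseq
      by_contra hcon
      push_neg at hcon
      obtain ⟨mid, τ₁, τ₂, hτsplit, hτ₁len⟩ := walk_split_at τ (show 1 ≤ τ.length by omega)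
      have hτ₂len : τ₂.length = ℓ - 1 := by
        have := SimpleGraph.Walk.length_append τ₁ τ₂
        rw [← hτsplit, hτlen, hτ₁len] at this
        omega
      have hprelen : (α.append τ₁).length = s + 1 := by
        rw [SimpleGraph.Walk.length_append, hαlen, hτ₁len]
      have hpostlen : (τ₂.append β).length = (ℓ - 1) + s := by
        rw [SimpleGraph.Walk.length_append, hτ₂len, hβlen]
      have hcombg : IsGeodesic (GMGraph S P) ((α.append τ₁).append (τ₂.append β)) := by
        unfold IsGeodesic
        rw [SimpleGraph.Walk.length_append, hprelen, hpostlen, hdist]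
        omega
      obtain ⟨hpreg, hpostg, -⟩ := geodesic_split (α.append τ₁) (τ₂.append β) hcombg
      have hdist1 : (GMGraph S P).dist (atLevel i a₁ dbar) mid = s + 1 := by
        rw [← hprelen]; exact hpreg.symm
      have hdist2 : (GMGraph S P).dist mid (atLevel i a₂ dbar) = (ℓ - 1) + s := by
        rw [← hpostlen]; exact hpostg.symm
      have hmidτ : mid ∈ τ.support := by
        rw [hτsplit, SimpleGraph.Walk.mem_support_append_iff]
        exact Or.inl (SimpleGraph.Walk.end_mem_support τ₁)
      have hmiddepth : depth mid = dbar + s := hτdepth mid hmidτ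
      have hmidH : mid ∈ horoball P i g := (hτdeep mid hmidτ).1
      have hmidmem : mid ∈ ((α.append τ₁).append (τ₂.append β)).support := by
        rw [SimpleGraph.Walk.mem_support_append_iff]
        exact Or.inl (SimpleGraph.Walk.end_mem_support _)
      rcases hhyp η₁.reverse η₂ ((α.append τ₁).append (τ₂.append β))
        (IsGeodesic.reverse hη₁g) hη₂g hcombg mid hmidmem with ⟨y, hy, hyd⟩ | ⟨y, hy, hyd⟩
      · rw [SimpleGraph.Walk.support_reverse, List.mem_reverse] at hy
        have hnd := near_deep_in_horoball (P := P) (z := y) hSgen hmidH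
          (by rw [hmiddepth]; omega)
        have hydeep : dbar ≤ depth y := by
          have := hnd.2; rw [hmiddepth] at this; omega
        have hyx := support_entry hdbar1 hx₁ hη₁p hη₁a hy hnd.1 hydeep
        rw [hyx] at hyd
        rw [SimpleGraph.dist_comm] at hyd
        omega
      · have hnd := near_deep_in_horoball (P := P) (z := y) hSgen hmidH
          (by rw [hmiddepth]; omega)
        have hydeep : dbar ≤ depth y := by
          have := hnd.2; rw [hmiddepth] at this; omega
        have hyx := support_entry hdbar1 hx₂ hη₂p hη₂a hy hnd.1 hydeep
        rw [hyx] at hyd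
        omega
    rw [hdist]
    rcases Nat.lt_or_ge s δ with h | h
    · omega
    · have hseq : s = δ := by omega
      have := hℓδ hseq
      omega

end Final

end GM
namespace GM

section Construct

variable {G : Type} [Group G] {ι : Type}
variable {S : Set G} {P : ι → Subgroup G} {i : ι} {g : G}

lemma construct_geodesic (hSgen : Subgroup.closure S = ⊤)
    (hPgen : Subgroup.closure ((S : Set G) ∩ (P i : Set G)) = P i)
    {δ : ℕ} (hhyp : SlimTriangles (GMGraph S P) δ) (hδ : 1 ≤ δ)
    {dbar : ℕ} (hd : δ ≤ dbar) {t : GMVert G ι}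
    (ht : t ∈ horoball P i g) (htd : depth t = dbar) :
    ∃ (x u w : GMVert G ι) (η : (GMGraph S P).Walk (idv : GMVert G ι) x)
      (α : (GMGraph S P).Walk x u) (τ : (GMGraph S P).Walk u w)
      (β : (GMGraph S P).Walk w t),
      IsGeodesic (GMGraph S P) (η.append (α.append (τ.append β))) ∧
      x ∈ horoSphere P i g dbar ∧
      (∀ v ∈ η.support.dropLast, v ∉ horoSphere P i g dbar) ∧
      IsVerticalWalk α ∧ IsVerticalWalk β ∧ α.length = β.length ∧
      (∀ v ∈ α.support, v ∈ horoDeep P i g dbar) ∧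
      (∀ v ∈ β.support, v ∈ horoDeep P i g dbar) ∧
      IsHorizontalWalk τ ∧ τ.length ≤ 3 ∧
      (∀ v ∈ τ.support, v ∈ horoDeep P i g dbar) ∧
      IsGeodesic (GMGraph S P) η ∧ η.IsPath := by
  classical
  have hdbar1 : 1 ≤ dbar := le_trans hδ hd
  have hconn := gm_connected (P := P) hSgen
  obtain ⟨p, hppath, hplen⟩ := hconn.exists_path_of_dist (idv : GMVert G ι) t
  have hpg : IsGeodesic (GMGraph S P) p := hplen
  obtain ⟨x, η, ρ, hsplit, hx, havoid⟩ :=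
    exists_first_split (fun v => v ∈ horoSphere P i g dbar) p ⟨ht, htd⟩
  have hpg' : IsGeodesic (GMGraph S P) (η.append ρ) := by rw [← hsplit]; exact hpg
  obtain ⟨hηg, hρg, hdsum⟩ := geodesic_split η ρ hpg'
  have hηp : η.IsPath := by
    rw [SimpleGraph.Walk.isPath_def]
    have hnodup := hppath.support_nodup
    rw [hsplit, SimpleGraph.Walk.support_append] at hnodup
    exact (List.nodup_append.mp hnodup).1
  by_cases hxt : x = t
  · subst hxt
    refine ⟨x, x, x, η, SimpleGraph.Walk.nil, SimpleGraph.Walk.nil, SimpleGraph.Walk.nil,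
      ?_, hx, havoid, ?_, ?_, rfl, ?_, ?_, ?_, ?_, ?_, hηg, hηp⟩
    · unfold IsGeodesic
      rw [SimpleGraph.Walk.length_append, SimpleGraph.Walk.length_append,
        SimpleGraph.Walk.length_append, SimpleGraph.Walk.length_nil]
      have := hηg
      unfold IsGeodesic at this
      omega
    · intro d hd'; simp at hd'
    · intro d hd'; simp at hd'
    · intro v hv; simp only [SimpleGraph.Walk.support_nil, List.mem_singleton] at hv
      subst hv; exact ⟨hx.1, by rw [hx.2]⟩
    · intro v hv; simp only [SimpleGraph.Walk.support_nil, List.mem_singleton] at hv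
      subst hv; exact ⟨hx.1, by rw [hx.2]⟩
    · intro d hd'; simp at hd'
    · simp
    · intro v hv; simp only [SimpleGraph.Walk.support_nil, List.mem_singleton] at hv
      subst hv; exact ⟨hx.1, by rw [hx.2]⟩
  · obtain ⟨a, hxa⟩ : ∃ a, x = atLevel i a dbar :=
      ⟨baseElt x, eq_atLevel hx.1 hx.2 hdbar1⟩
    obtain ⟨b, htb⟩ : ∃ b, t = atLevel i b dbar :=
      ⟨baseElt t, eq_atLevel ht htd hdbar1⟩
    have hga : g⁻¹ * a ∈ P i := by
      have := base_mem_of_mem hx.1; rw [hxa, baseElt_atLevel] at this; exact this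
    have hgb : g⁻¹ * b ∈ P i := by
      have := base_mem_of_mem ht; rw [htb, baseElt_atLevel] at this; exact this
    have hab : a ≠ b := by
      intro h; apply hxt; rw [hxa, htb, h]
    subst hxa; subst htb
    have hH := geodesic_in_horoball hSgen hPgen hhyp hx.1 ht hx.2 htd hd hdbar1 ρ hρg
    obtain ⟨s, ℓ, α, τ, β, hαlen, hβlen, hτlen, hℓ3, hρ2, hαv, hβv, hτh,
      hαdeep, hβdeep, hτdeep, hτdepth⟩ :=
      structured_tail hPgen hga hgb hab hdbar1 ρ hρg hH
    refine ⟨atLevel i a dbar, atLevel i a (dbar + s), atLevel i b (dbar + s),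
      η, α, τ, β, ?_, hx, havoid, hαv, hβv, by rw [hαlen, hβlen],
      hαdeep, hβdeep, hτh, by omega, hτdeep, hηg, hηp⟩
    unfold IsGeodesic
    rw [SimpleGraph.Walk.length_append, SimpleGraph.Walk.length_append,
      SimpleGraph.Walk.length_append, hαlen, hβlen, hτlen]
    have h1 : p.length = η.length + ρ.length := by
      rw [hsplit, SimpleGraph.Walk.length_append]
    unfold IsGeodesic at hpg
    rw [hsplit] at hpg
    rw [SimpleGraph.Walk.length_append] at hpg
    omega

end Construct

end GM
open GM in
/-- Lemma "tight".  Suppose `t₁` and `t₂` are vertices of depth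
`dbar ≥ δ` lying in a single horoball `H` of the Groves–Manning space `X`.  Then for each
`i ∈ {1,2}` there is a geodesic `γᵢ` from `*` to `tᵢ` of the form `(ηᵢ, αᵢ, τᵢ, βᵢ)`,
where the endpoint `xᵢ` of `ηᵢ` is the first point of `γᵢ` in `H(dbar)`, `αᵢ` and `βᵢ`
are vertical segments of the same length contained in `H^dbar`, and `τᵢ` is a horizontal
segment of length `≤ 3`.  Furthermore `d(x₁,x₂) ≤ 2δ + 1`. -/
theorem statement_1 {G : Type} [Group G] {ι : Type} [Fintype ι]
    (S : Finset G) (P : ι → Subgroup G)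
    (hSgen : Subgroup.closure (S : Set G) = ⊤)
    (hPgen : ∀ i, Subgroup.closure ((S : Set G) ∩ (P i : Set G)) = P i)
    (hProper : ∀ i, P i ≠ ⊤)
    (δ : ℕ) (hδ : 1 ≤ δ) (hhyp : SlimTriangles (GMGraph (S : Set G) P) δ)
    (i : ι) (g : G) (dbar : ℕ) (hd : δ ≤ dbar)
    (t₁ t₂ : GMVert G ι)
    (ht₁ : t₁ ∈ horoball P i g) (ht₁d : depth t₁ = dbar)
    (ht₂ : t₂ ∈ horoball P i g) (ht₂d : depth t₂ = dbar) :
    ∃ (x₁ u₁ w₁ : GMVert G ι)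
      (η₁ : (GMGraph (S : Set G) P).Walk idv x₁)
      (α₁ : (GMGraph (S : Set G) P).Walk x₁ u₁)
      (τ₁ : (GMGraph (S : Set G) P).Walk u₁ w₁)
      (β₁ : (GMGraph (S : Set G) P).Walk w₁ t₁)
      (x₂ u₂ w₂ : GMVert G ι)
      (η₂ : (GMGraph (S : Set G) P).Walk idv x₂)
      (α₂ : (GMGraph (S : Set G) P).Walk x₂ u₂)
      (τ₂ : (GMGraph (S : Set G) P).Walk u₂ w₂)
      (β₂ : (GMGraph (S : Set G) P).Walk w₂ t₂),
      -- `γ₁ = (η₁, α₁, τ₁, β₁)` is a geodesic from `*` to `t₁`: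
      IsGeodesic (GMGraph (S : Set G) P) (η₁.append (α₁.append (τ₁.append β₁))) ∧
      -- `x₁` is the first point of `γ₁` in `H(dbar)`:
      x₁ ∈ horoSphere P i g dbar ∧
      (∀ v ∈ η₁.support.dropLast, v ∉ horoSphere P i g dbar) ∧
      -- `α₁` and `β₁` are vertical, of the same length, contained in `H^dbar`:
      IsVerticalWalk α₁ ∧ IsVerticalWalk β₁ ∧ α₁.length = β₁.length ∧
      (∀ v ∈ α₁.support, v ∈ horoDeep P i g dbar) ∧
      (∀ v ∈ β₁.support, v ∈ horoDeep P i g dbar) ∧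
      -- `τ₁` is horizontal of length at most 3, contained in `H^dbar`:
      IsHorizontalWalk τ₁ ∧ τ₁.length ≤ 3 ∧
      (∀ v ∈ τ₁.support, v ∈ horoDeep P i g dbar) ∧
      -- likewise for `γ₂ = (η₂, α₂, τ₂, β₂)`:
      IsGeodesic (GMGraph (S : Set G) P) (η₂.append (α₂.append (τ₂.append β₂))) ∧
      x₂ ∈ horoSphere P i g dbar ∧
      (∀ v ∈ η₂.support.dropLast, v ∉ horoSphere P i g dbar) ∧
      IsVerticalWalk α₂ ∧ IsVerticalWalk β₂ ∧ α₂.length = β₂.length ∧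
      (∀ v ∈ α₂.support, v ∈ horoDeep P i g dbar) ∧
      (∀ v ∈ β₂.support, v ∈ horoDeep P i g dbar) ∧
      IsHorizontalWalk τ₂ ∧ τ₂.length ≤ 3 ∧
      (∀ v ∈ τ₂.support, v ∈ horoDeep P i g dbar) ∧
      -- furthermore `d(x₁, x₂) ≤ 2δ + 1`:
      (GMGraph (S : Set G) P).dist x₁ x₂ ≤ 2 * δ + 1 := by
  obtain ⟨x₁, u₁, w₁, η₁, α₁, τ₁, β₁, hg1, hx1, ha1, hαv1, hβv1, hl1, hαd1, hβd1,
    hτh1, hτl1, hτd1, hη1g, hη1p⟩ :=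
    construct_geodesic (S := (S : Set G)) (P := P) (i := i) (g := g)
      hSgen (hPgen i) hhyp hδ hd ht₁ ht₁d
  obtain ⟨x₂, u₂, w₂, η₂, α₂, τ₂, β₂, hg2, hx2, ha2, hαv2, hβv2, hl2, hαd2, hβd2,
    hτh2, hτl2, hτd2, hη2g, hη2p⟩ :=
    construct_geodesic (S := (S : Set G)) (P := P) (i := i) (g := g)
      hSgen (hPgen i) hhyp hδ hd ht₂ ht₂d
  refine ⟨x₁, u₁, w₁, η₁, α₁, τ₁, β₁, x₂, u₂, w₂, η₂, α₂, τ₂, β₂,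
    hg1, hx1, ha1, hαv1, hβv1, hl1, hαd1, hβd1, hτh1, hτl1, hτd1,
    hg2, hx2, ha2, hαv2, hβv2, hl2, hαd2, hβd2, hτh2, hτl2, hτd2, ?_⟩
  exact entry_close hSgen (hPgen i) hhyp hδ hd hx1 hx2 hη1g hη1p ha1 hη2g hη2p ha2
end

section
/- Suppose G is an infinite finitely generated group with finite generating set S, and let Γ be the Cayley graph of G with respect to S, with basepoint the identity vertex *. Then for any integer r > 0 and any point x ∈ Γ − B_{2r}(*) there is a geodesic ray in Γ starting at x whose image avoids B_r(*). -/
/-! Core definitions: Cayley graphs, combinatorial horoballs, and the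
Groves–Manning space of a relatively hyperbolic pair, as a locally finite graph. -/

open SimpleGraph

/-! ### Auxiliary material for Statement 5 -/

open SimpleGraph GM Pointwise CategoryTheory Opposite

namespace Five

section GraphLemmas

variable {V : Type} {Γ : SimpleGraph V} {u v : V}

/-- Between any two `getVert`s of a walk there is a walk of length at most `j - i`. -/
lemma exists_walk_getVert (p : Γ.Walk u v) {i j : ℕ} (hij : i ≤ j) :
    ∃ q : Γ.Walk (p.getVert i) (p.getVert j), q.length ≤ j - i := by
  induction p generalizing i j with
  | nil => exact ⟨Walk.nil, by simp⟩
  | @cons a b c h p ih =>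
    cases i with
    | zero =>
      cases j with
      | zero => exact ⟨Walk.nil, by simp⟩
      | succ j =>
        obtain ⟨q, hq⟩ := ih (Nat.zero_le j)
        refine ⟨Walk.cons h (q.copy p.getVert_zero rfl), ?_⟩
        have := Walk.length_copy q p.getVert_zero rfl; exact (show (q.copy p.getVert_zero rfl).length + 1 ≤ j + 1 - 0 by omega)
    | succ i =>
      cases j with
      | zero => omega
      | succ j =>
        obtain ⟨q, hq⟩ := ih (Nat.succ_le_succ_iff.mp hij)
        exact ⟨q, by simpa using hq⟩

lemma dist_getVert_le (p : Γ.Walk u v) {i j : ℕ} (hij : i ≤ j) :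
    Γ.dist (p.getVert i) (p.getVert j) ≤ j - i := by
  obtain ⟨q, hq⟩ := exists_walk_getVert p hij
  exact le_trans (SimpleGraph.dist_le q) hq

/-- On a geodesic walk, distances between `getVert`s are exactly index differences. -/
lemma geodesic_getVert (hconn : Γ.Connected) (p : Γ.Walk u v) (hp : p.length = Γ.dist u v)
    {i j : ℕ} (hij : i ≤ j) (hj : j ≤ p.length) :
    Γ.dist (p.getVert i) (p.getVert j) = j - i := by
  have h1 := dist_getVert_le p hij
  have h2 : Γ.dist u (p.getVert i) ≤ i := by
    have := dist_getVert_le p (Nat.zero_le i)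
    simpa using this
  have h3 : Γ.dist (p.getVert j) v ≤ p.length - j := by
    have := dist_getVert_le p hj
    simpa [p.getVert_length] using this
  have h4 := hconn.dist_triangle (u := u) (v := p.getVert i) (w := v)
  have h5 := hconn.dist_triangle (u := p.getVert i) (v := p.getVert j) (w := v)
  omega

end GraphLemmas

section Cayley

variable {G : Type} [Group G] {S : Set G}

lemma cayley_adj_smul (g : G) {a b : G} (h : (cayleyGraph S).Adj a b) :
    (cayleyGraph S).Adj (g * a) (g * b) := by
  obtain ⟨h1, h2⟩ := (h : cayleyAdj S a b)
  change cayleyAdj S (g * a) (g * b)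
  refine ⟨fun he => h1 (mul_left_cancel he), ?_⟩
  simpa [mul_assoc] using h2

/-- Left translation as a graph homomorphism. -/
def mulGHom (g : G) : cayleyGraph S →g cayleyGraph S :=
  ⟨fun a => g * a, fun h => cayley_adj_smul g h⟩

lemma reachable_smul (g : G) {a b : G} (h : (cayleyGraph S).Reachable a b) :
    (cayleyGraph S).Reachable (g * a) (g * b) := by
  obtain ⟨p⟩ := h
  exact ⟨p.map (mulGHom g)⟩

lemma dist_smul_le (g : G) (a b : G) :
    (cayleyGraph S).dist (g * a) (g * b) ≤ (cayleyGraph S).dist a b := by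
  by_cases hr : (cayleyGraph S).Reachable a b
  · obtain ⟨p, hp⟩ := hr.exists_walk_length_eq_dist
    calc (cayleyGraph S).dist (g * a) (g * b) ≤ (p.map (mulGHom g)).length :=
          SimpleGraph.dist_le _
      _ = (cayleyGraph S).dist a b := by rw [SimpleGraph.Walk.length_map, hp]
  · have hr2 : ¬ (cayleyGraph S).Reachable (g * a) (g * b) := fun h => by
      have := reachable_smul (S := S) g⁻¹ h
      simp only [← mul_assoc, inv_mul_cancel, one_mul] at this
      exact hr this
    rw [SimpleGraph.dist_eq_zero_of_not_reachable hr,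
      SimpleGraph.dist_eq_zero_of_not_reachable hr2]

/-- Left translation is an isometry of the Cayley graph. -/
lemma dist_smul (g a b : G) :
    (cayleyGraph S).dist (g * a) (g * b) = (cayleyGraph S).dist a b := by
  refine le_antisymm (dist_smul_le g a b) ?_
  have := dist_smul_le (S := S) g⁻¹ (g * a) (g * b)
  simpa [mul_assoc] using this

lemma cayley_reachable_one (hSgen : Subgroup.closure S = ⊤) (g : G) :
    (cayleyGraph S).Reachable 1 g := by
  have hg : g ∈ Subgroup.closure S := hSgen ▸ Subgroup.mem_top g
  induction hg using Subgroup.closure_induction with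
  | mem s hs =>
    by_cases h1 : s = 1
    · subst h1; exact Reachable.refl 1
    · exact SimpleGraph.Adj.reachable (show cayleyAdj S 1 s from ⟨fun h => h1 h.symm, Or.inl (by simpa using hs)⟩)
  | one => exact Reachable.refl 1
  | mul a b ha hb iha ihb =>
    refine iha.trans ?_
    have := reachable_smul (S := S) a ihb
    simpa using this
  | inv a ha iha =>
    have := reachable_smul (S := S) a⁻¹ iha
    simpa using this.symm

lemma cayley_connected (hSgen : Subgroup.closure S = ⊤) : (cayleyGraph S).Connected := by
  have : Nonempty G := ⟨1⟩
  exact ⟨fun a b => (cayley_reachable_one hSgen a).symm.trans (cayley_reachable_one hSgen b)⟩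

end Cayley

section Finiteness

variable {G : Type} [Group G] [DecidableEq G]

/-- The symmetrized generating set together with the identity. -/
def T (S : Finset G) : Finset G := (S ∪ S.image (·⁻¹)) ∪ {1}

lemma one_mem_T (S : Finset G) : (1 : G) ∈ T S := by simp [T]

lemma step_mem_T {S : Finset G} {a b : G} (h : (cayleyGraph (S : Set G)).Adj a b) :
    a⁻¹ * b ∈ T S := by
  obtain ⟨-, h2 | h2⟩ := (h : cayleyAdj (S : Set G) a b)
  · simp only [T, Finset.mem_union]; exact Or.inl (Or.inl h2)
  · have : a⁻¹ * b = (b⁻¹ * a)⁻¹ := by group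
    rw [this]
    simp only [T, Finset.mem_union, Finset.mem_image]
    exact Or.inl (Or.inr ⟨_, h2, rfl⟩)

lemma walk_mem_T {S : Finset G} {a b : G} (p : (cayleyGraph (S : Set G)).Walk a b) :
    a⁻¹ * b ∈ T S ^ p.length := by
  induction p with
  | nil => simp
  | @cons a c b h p ih =>
    have : a⁻¹ * b = (a⁻¹ * c) * (c⁻¹ * b) := by group
    rw [SimpleGraph.Walk.length_cons, this, pow_succ']
    exact Finset.mul_mem_mul (step_mem_T h) ih

lemma ball_finite {S : Finset G} (hconn : (cayleyGraph (S : Set G)).Connected) (n : ℕ) :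
    {g : G | (cayleyGraph (S : Set G)).dist 1 g ≤ n}.Finite := by
  refine Set.Finite.subset (Finset.finite_toSet (T S ^ n)) ?_
  intro g hg
  obtain ⟨p, hp⟩ := hconn.exists_walk_length_eq_dist 1 g
  have h1 := walk_mem_T p
  simp only [inv_one, one_mul] at h1
  rw [hp] at h1
  exact Finset.pow_subset_pow_right (one_mem_T S) hg h1

lemma exists_far {S : Finset G} [Infinite G]
    (hconn : (cayleyGraph (S : Set G)).Connected) (n : ℕ) :
    ∃ g : G, n ≤ (cayleyGraph (S : Set G)).dist 1 g := by
  by_contra hcon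
  push_neg at hcon
  have : {g : G | (cayleyGraph (S : Set G)).dist 1 g ≤ n} = Set.univ := by
    ext g; simpa using (hcon g).le
  have hfin := ball_finite hconn n
  rw [this] at hfin
  exact Set.infinite_univ hfin

end Finiteness

section Segments

variable {G : Type} [Group G] [DecidableEq G]

/-- A geodesic segment of radius `n` centered at the identity, extended by `1` outside
the window `[-n, n]`. -/
def Seg (S : Finset G) (n : ℕ) : Type :=
  {f : ℤ → G // f 0 = 1 ∧ (∀ k : ℤ, n < k.natAbs → f k = 1) ∧
    ∀ k l : ℤ, k.natAbs ≤ n → l.natAbs ≤ n →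
      (cayleyGraph (S : Set G)).dist (f k) (f l) = (k - l).natAbs}

lemma seg_nonempty {S : Finset G} [Infinite G]
    (hconn : (cayleyGraph (S : Set G)).Connected) (n : ℕ) : Nonempty (Seg S n) := by
  obtain ⟨g, hg⟩ := exists_far hconn (2 * n)
  obtain ⟨p, hp⟩ := hconn.exists_walk_length_eq_dist 1 g
  have hlen : 2 * n ≤ p.length := by omega
  refine ⟨⟨fun k => if k.natAbs ≤ n then (p.getVert n)⁻¹ * p.getVert (n + k).toNat else 1,
    ?_, ?_, ?_⟩⟩
  · simp
  · intro k hk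
    beta_reduce
    rw [if_neg (by omega)]
  · intro k l hk hl
    beta_reduce
    rw [if_pos hk, if_pos hl, dist_smul]
    rcases le_total ((n : ℤ) + k).toNat ((n : ℤ) + l).toNat with hab | hab
    · rw [geodesic_getVert hconn p hp hab (by omega)]; omega
    · rw [SimpleGraph.dist_comm, geodesic_getVert hconn p hp hab (by omega)]; omega

lemma seg_finite {S : Finset G}
    (hconn : (cayleyGraph (S : Set G)).Connected) (n : ℕ) : Finite (Seg S n) := by
  haveI : Finite {g : G | (cayleyGraph (S : Set G)).dist 1 g ≤ n} :=
    (ball_finite hconn n).to_subtype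
  set B := {g : G | (cayleyGraph (S : Set G)).dist 1 g ≤ n}
  have key : ∀ (f : Seg S n) (k : ℤ), k.natAbs ≤ n → f.val k ∈ B := by
    intro f k hk
    have h := f.2.2.2 0 k (by simp) hk
    rw [f.2.1] at h
    simp only [B, Set.mem_setOf_eq, h]
    omega
  refine Finite.of_injective
    (fun f : Seg S n => fun i : Fin (2 * n + 1) =>
      (⟨f.val ((i : ℤ) - n), key f _ (by omega)⟩ : B)) ?_
  intro f g hfg
  apply Subtype.ext
  funext k
  by_cases hk : k.natAbs ≤ n
  · have hi : (k + n).toNat < 2 * n + 1 := by omega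
    have hval := Subtype.ext_iff.mp (congrFun hfg ⟨(k + n).toNat, hi⟩)
    simp only [Fin.val_mk] at hval
    rwa [show ((((k + (n : ℤ)).toNat : ℕ) : ℤ) - (n : ℤ)) = k by omega] at hval
  · rw [f.2.2.1 k (by omega), g.2.2.1 k (by omega)]

/-- Truncation of a segment to a smaller window. -/
def trunc {S : Finset G} {m n : ℕ} (h : m ≤ n) (f : Seg S n) : Seg S m :=
  ⟨fun k => if k.natAbs ≤ m then f.val k else 1,
    by simpa using f.2.1,
    fun k hk => if_neg (by omega),
    fun k l hk hl => by
      beta_reduce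
      rw [if_pos hk, if_pos hl]
      exact f.2.2.2 k l (le_trans hk h) (le_trans hl h)⟩

/-- The inverse system of centered geodesic segments. -/
def segFunctor (S : Finset G) : ℕᵒᵖ ⥤ Type where
  obj n := Seg S n.unop
  map {n m} f := TypeCat.ofHom (trunc (leOfHom f.unop))
  map_id n := by
    refine ConcreteCategory.hom_ext _ _ (fun s => ?_)
    apply Subtype.ext
    funext k
    by_cases hk : k.natAbs ≤ n.unop
    · simp [trunc, hk]
    · simp only [trunc, if_neg hk, types_id_apply, TypeCat.ofHom_apply]
      exact (s.2.2.1 k (by omega)).symm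
  map_comp {n m m'} f g := by
    refine ConcreteCategory.hom_ext _ _ (fun s => ?_)
    apply Subtype.ext
    funext k
    have hg : m'.unop ≤ m.unop := leOfHom g.unop
    by_cases hk : k.natAbs ≤ m'.unop
    · simp [trunc, hk, le_trans hk hg]
    · simp [trunc, hk]

/-- A bi-infinite geodesic line through the identity. -/
lemma exists_line {S : Finset G} [Infinite G]
    (hconn : (cayleyGraph (S : Set G)).Connected) :
    ∃ L : ℤ → G, L 0 = 1 ∧
      ∀ k l : ℤ, (cayleyGraph (S : Set G)).dist (L k) (L l) = (k - l).natAbs := by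
  haveI : ∀ j : ℕᵒᵖ, Finite ((segFunctor S).obj j) := fun j => seg_finite hconn j.unop
  haveI : ∀ j : ℕᵒᵖ, Nonempty ((segFunctor S).obj j) := fun j => seg_nonempty hconn j.unop
  obtain ⟨u, hu⟩ := nonempty_sections_of_finite_inverse_system (segFunctor S)
  have compat : ∀ {m n : ℕ} (h : m ≤ n) (k : ℤ), k.natAbs ≤ m →
      (u (op n)).val k = (u (op m)).val k := by
    intro m n h k hk
    have hsec := hu ((homOfLE h).op : op n ⟶ op m)
    rw [← hsec]
    simp only [segFunctor, trunc, TypeCat.ofHom_apply]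
    exact (if_pos hk).symm
  refine ⟨fun k => (u (op k.natAbs)).val k, (u (op 0)).2.1, ?_⟩
  intro k l
  have h1 : (u (op (max k.natAbs l.natAbs))).val k = (u (op k.natAbs)).val k :=
    compat (le_max_left _ _) k le_rfl
  have h2 : (u (op (max k.natAbs l.natAbs))).val l = (u (op l.natAbs)).val l :=
    compat (le_max_right _ _) l le_rfl
  beta_reduce
  rw [← h1, ← h2]
  exact (u (op (max k.natAbs l.natAbs))).2.2.2 k l (le_max_left _ _) (le_max_right _ _)

end Segments

end Five

open GM in
/-- no linear dead ends.  Suppose `G` is an infinite finitely generated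
group with finite generating set `S`, and let `Γ` be the Cayley graph of `G` with respect
to `S`, with basepoint the identity vertex `*`.  Then for any integer `r > 0` and any
vertex `x ∈ Γ − B_{2r}(*)` there is a geodesic ray in `Γ` starting at `x` whose image
avoids `B_r(*)`. -/
theorem statement_5 {G : Type} [Group G] [Infinite G]
    (S : Finset G) (hSgen : Subgroup.closure (S : Set G) = ⊤)
    (r : ℕ) (hr : 0 < r)
    (x : G) (hx : ¬ (cayleyGraph (S : Set G)).dist 1 x ≤ 2 * r) :
    ∃ c : ℕ → G, c 0 = x ∧
      (∀ m n : ℕ, (cayleyGraph (S : Set G)).dist (c m) (c n) = Nat.dist m n) ∧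
      (∀ n : ℕ, ¬ (cayleyGraph (S : Set G)).dist 1 (c n) ≤ r) := by
  letI := Classical.decEq G
  have hconn := Five.cayley_connected hSgen
  obtain ⟨L, hL0, hL⟩ := Five.exists_line (S := S) hconn
  set Γ := cayleyGraph (S : Set G) with hΓ
  set c' : ℤ → G := fun k => x * L k with hc'
  have hd : ∀ k l : ℤ, Γ.dist (c' k) (c' l) = (k - l).natAbs := by
    intro k l
    simp only [hc']
    rw [Five.dist_smul]
    exact hL k l
  have hc0 : c' 0 = x := by simp [hc', hL0]
  have hx' : 2 * r < Γ.dist 1 x := by omega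
  have hfar : ∀ k : ℤ, Γ.dist 1 (c' k) ≤ r → r < k.natAbs := by
    intro k hk
    have h1 : Γ.dist 1 x ≤ Γ.dist 1 (c' k) + Γ.dist (c' k) x := hconn.dist_triangle
    have h2 : Γ.dist (c' k) x = k.natAbs := by
      have := hd k 0
      rw [hc0] at this
      simpa using this
    rw [h2] at h1
    omega
  by_cases hpos : ∀ n : ℕ, ¬ Γ.dist 1 (c' n) ≤ r
  · refine ⟨fun n => c' n, by simpa using hc0, ?_, hpos⟩
    intro m n
    have := hd m n
    simp [Nat.dist]
    omega
  · push_neg at hpos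
    obtain ⟨m, hm⟩ := hpos
    refine ⟨fun n => c' (-(n : ℤ)), by simpa using hc0, ?_, ?_⟩
    · intro a b
      have := hd (-(a : ℤ)) (-(b : ℤ))
      simp [Nat.dist]
      omega
    · intro n hn
      have hn' : Γ.dist 1 (c' (-(n : ℤ))) ≤ r := hn
      have hrm : r < m := by
        have := hfar m hm
        omega
      have hrn : r < n := by
        have := hfar (-(n : ℤ)) hn'
        omega
      have h3 : Γ.dist (c' m) (c' (-(n : ℤ))) = m + n := by
        have := hd m (-(n : ℤ))
        omega
      have h4 : Γ.dist (c' m) (c' (-(n : ℤ))) ≤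
          Γ.dist (c' m) 1 + Γ.dist 1 (c' (-(n : ℤ))) := hconn.dist_triangle
      have h5 : Γ.dist (c' m) 1 = Γ.dist 1 (c' m) := SimpleGraph.dist_comm
      omega
end
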